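/- arXiv:2303.00946 — 6 statements merged into one kernel-verified Lean document; each statement's English description precedes it below -/
import Mathlib

section
/- Let φ(x) = (K/σ)·exp(−π x² K²/σ²) be a Gaussian density with σ, K > 0, and let φ_p(x) = Σ_{j∈ℤ} φ(x+j) be its periodization. If K ≥ 3σ, then for all x ∈ [−1/3, 1/3], φ(x) ≤ φ_p(x) ≤ (1 + 10⁻⁴)·φ(x). -/
open Real Set

lemma exp_pi_big : (22.9 : ℝ) ≤ Real.exp π := by
  have h1 : (3.141592 : ℝ) < π := Real.pi_gt_d6
  have h2 : (2.7182818283 : ℝ) < Real.exp 1 := Real.exp_one_gt_d9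
  have h3 : Real.exp 3.141592 ≤ Real.exp π := Real.exp_le_exp.mpr h1.le
  have h4 : Real.exp (3.141592 : ℝ) = Real.exp 1 ^ 3 * Real.exp 0.141592 := by
    rw [show ((3.141592:ℝ)) = (3:ℕ) * 1 + 0.141592 by norm_num, Real.exp_add,
      Real.exp_nat_mul]
  have h5 : (1.141592 : ℝ) ≤ Real.exp 0.141592 := by
    have := Real.add_one_le_exp (0.141592 : ℝ); linarith
  have hc : (2.7182818283 : ℝ)^3 ≤ Real.exp 1 ^ 3 :=
    pow_le_pow_left₀ (by norm_num) h2.le 3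
  have h6 : (2.7182818283 : ℝ)^3 * 1.141592 ≤ Real.exp 1 ^ 3 * Real.exp 0.141592 :=
    mul_le_mul hc h5 (by norm_num) (by positivity)
  nlinarith

lemma exp_neg_3pi : Real.exp (-(3*π)) ≤ 1/12000 := by
  have h := exp_pi_big
  have h2 : (12000:ℝ) ≤ Real.exp (3*π) := by
    rw [show (3:ℝ)*π = (3:ℕ)*π by norm_num, Real.exp_nat_mul]
    calc (12000:ℝ) ≤ 22.9^3 := by norm_num
    _ ≤ Real.exp π ^ 3 := pow_le_pow_left₀ (by norm_num) h 3
  rw [Real.exp_neg, le_div_iff₀ (by norm_num), inv_mul_le_iff₀ (Real.exp_pos _)]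
  linarith


lemma key_numeric (a x : ℝ) (ha9 : 9 * π ≤ a) (ha0 : 0 < a)
    (hx1 : -(1/3:ℝ) ≤ x) (hx2 : x ≤ (1/3:ℝ)) :
    Real.exp (-(a * (1 + 2 * x))) + Real.exp (-(a * (1 - 2 * x)))
      ≤ (1/10000) * (1 - Real.exp (-(4 * a / 3))) := by
  set L : ℝ := Real.exp (-(a * (1 + 2 * x))) with hL
  set R : ℝ := Real.exp (-(a * (1 - 2 * x))) with hR
  set p : ℝ := Real.exp (-(5 * a / 3)) with hp
  set q : ℝ := Real.exp (-(a / 3)) with hq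
  have hL0 : 0 < L := Real.exp_pos _
  have hLq : L ≤ q := by
    apply Real.exp_le_exp.mpr
    linarith [mul_nonneg ha0.le (show (0:ℝ) ≤ 2/3 + 2 * x by linarith)]
  have hpL : p ≤ L := by
    apply Real.exp_le_exp.mpr
    linarith [mul_nonneg ha0.le (show (0:ℝ) ≤ 2/3 - 2 * x by linarith)]
  have hprod : L * R = p * q := by
    rw [hL, hR, hp, hq, ← Real.exp_add, ← Real.exp_add]; ring_nf
  have h1 : 0 ≤ (q - L) * (L - p) :=
    mul_nonneg (sub_nonneg.mpr hLq) (sub_nonneg.mpr hpL)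
  have h3 : 0 ≤ L * (q + p - L - R) := by
    rw [show L * (q + p - L - R) = (q - L) * (L - p) + (p * q - L * R) by ring, hprod]
    linarith
  have hstep1 : L + R ≤ q + p := by nlinarith [h3, hL0]
  have hq12 : q ≤ 1/12000 := by
    calc q ≤ Real.exp (-(3 * π)) := by apply Real.exp_le_exp.mpr; linarith
    _ ≤ 1/12000 := exp_neg_3pi
  have hq0 : 0 ≤ q := (Real.exp_pos _).le
  have hp5 : p = q ^ 5 := by rw [hp, hq, ← Real.exp_nat_mul]; norm_num; ring
  have hr4 : Real.exp (-(4 * a / 3)) = q ^ 4 := by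
    rw [hq, ← Real.exp_nat_mul]; norm_num; ring
  have h4 : q ^ 4 ≤ (1/12000:ℝ) ^ 4 := pow_le_pow_left₀ hq0 hq12 4
  have h5 : q ^ 5 ≤ (1/12000:ℝ) ^ 5 := pow_le_pow_left₀ hq0 hq12 5
  have hnum : (1/12000:ℝ) + (1/12000:ℝ)^5 + (1/10000) * (1/12000:ℝ)^4 ≤ 1/10000 := by
    norm_num
  rw [hr4]; rw [hp5] at hstep1; linarith

theorem periodized_gaussian_bounds (σ K : ℝ) (hσ : 0 < σ) (hK : 0 < K)
    (h3 : 3 * σ ≤ K) (x : ℝ) (hx : x ∈ Icc (-(1/3) : ℝ) (1/3)) :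
    (K / σ) * Real.exp (-π * x ^ 2 * K ^ 2 / σ ^ 2) ≤
      (∑' j : ℤ, (K / σ) * Real.exp (-π * (x + j) ^ 2 * K ^ 2 / σ ^ 2)) ∧
    (∑' j : ℤ, (K / σ) * Real.exp (-π * (x + j) ^ 2 * K ^ 2 / σ ^ 2)) ≤
      (1 + 10 ^ (-(4:ℤ))) * ((K / σ) * Real.exp (-π * x ^ 2 * K ^ 2 / σ ^ 2)) := by
  obtain ⟨hx1, hx2⟩ := hx
  set a : ℝ := π * K ^ 2 / σ ^ 2 with ha
  have hσ2 : (0:ℝ) < σ ^ 2 := by positivity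
  have ha9 : 9 * π ≤ a := by
    rw [ha, le_div_iff₀ hσ2]
    nlinarith [pi_pos, mul_nonneg (mul_nonneg pi_pos.le (sub_nonneg.mpr h3)) (by linarith : (0:ℝ) ≤ 3 * σ + K)]
  have ha0 : 0 < a := by nlinarith [pi_pos]
  set G0 : ℝ := Real.exp (-(a * x ^ 2)) with hG0
  set L : ℝ := Real.exp (-(a * (1 + 2 * x))) with hL
  set R : ℝ := Real.exp (-(a * (1 - 2 * x))) with hRdef
  set r : ℝ := Real.exp (-(4 * a / 3)) with hrdef
  have hr0 : 0 ≤ r := (Real.exp_pos _).le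
  have hr1 : r < 1 := by
    rw [hrdef, ← Real.exp_zero]; apply Real.exp_lt_exp.mpr; nlinarith
  have h1r : 0 < 1 - r := by linarith
  set A : ℝ := G0 * L with hA
  set B : ℝ := G0 * R with hB
  set m : ℤ → ℝ := fun j =>
    if j = 0 then G0 else if 1 ≤ j then A * r ^ (j - 1).toNat
      else B * r ^ (-j - 1).toNat with hm
  -- HasSum of m
  have hgeomA : HasSum (fun n : ℕ => A * r ^ n) (A * (1 - r)⁻¹) :=
    (hasSum_geometric_of_lt_one hr0 hr1).mul_left A
  have hgeomB : HasSum (fun n : ℕ => B * r ^ n) (B * (1 - r)⁻¹) :=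
    (hasSum_geometric_of_lt_one hr0 hr1).mul_left B
  have hpos : HasSum (fun n : ℕ => m n) (G0 + A * (1 - r)⁻¹) := by
    apply (hasSum_nat_add_iff' 1).mp
    have he : (fun n : ℕ => m (↑(n + 1))) = fun n : ℕ => A * r ^ n := by
      funext n
      have h0 : ((n : ℤ) + 1 ≠ 0) := by omega
      have h1 : (1 : ℤ) ≤ (n : ℤ) + 1 := by omega
      have h2 : (((n : ℤ) + 1) - 1).toNat = n := by omega
      simp only [hm, Nat.cast_add, Nat.cast_one, if_neg h0, if_pos h1, h2]
    have hm0 : m ((0:ℕ) : ℤ) = G0 := by simp [hm]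
    simp only [Finset.range_one, Finset.sum_singleton]
    rw [show (fun n : ℕ => m ↑(n + 1)) = fun n : ℕ => A * r ^ n from he, hm0,
      show G0 + A * (1 - r)⁻¹ - G0 = A * (1 - r)⁻¹ by ring]
    exact hgeomA
  have hneg : HasSum (fun n : ℕ => m (-((n : ℤ) + 1))) (B * (1 - r)⁻¹) := by
    have he : (fun n : ℕ => m (-((n : ℤ) + 1))) = fun n : ℕ => B * r ^ n := by
      funext n
      have h0 : (-((n : ℤ) + 1) ≠ 0) := by omega
      have h1 : ¬ (1 : ℤ) ≤ -((n : ℤ) + 1) := by omega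
      have h2 : (-(-((n : ℤ) + 1)) - 1).toNat = n := by omega
      simp only [hm, if_neg h0, if_neg h1, h2]
    rw [he]; exact hgeomB
  have hmsum : HasSum m (G0 + A * (1 - r)⁻¹ + (B * (1 - r)⁻¹)) :=
    HasSum.of_nat_of_neg_add_one hpos hneg
  -- termwise bound
  have hle : ∀ j : ℤ, Real.exp (-(a * (x + j) ^ 2)) ≤ m j := by
    intro j
    rcases eq_or_ne j 0 with rfl | hj0
    · simp [hm, hG0]
    rcases le_or_gt 1 j with hj1 | hj1
    · have ht : (1 : ℝ) ≤ (j : ℝ) := by exact_mod_cast hj1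
      have htn : (((j : ℤ) - 1).toNat : ℝ) = (j : ℝ) - 1 := by
        have : (((j : ℤ) - 1).toNat : ℤ) = j - 1 := by omega
        exact_mod_cast congrArg (Int.cast : ℤ → ℝ) this
      simp only [hm, if_neg hj0, if_pos hj1]
      rw [hA, hG0, hL, ← Real.exp_add, show r ^ ((j:ℤ) - 1).toNat
          = Real.exp ((((j:ℤ) - 1).toNat : ℝ) * (-(4 * a / 3))) by
            rw [Real.exp_nat_mul], htn, ← Real.exp_add]
      apply Real.exp_le_exp.mpr
      nlinarith [mul_nonneg (sub_nonneg.mpr ht)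
        (show (0:ℝ) ≤ (j:ℝ) - 1/3 + 2 * x by linarith), ha0.le,
        mul_nonneg ha0.le (mul_nonneg (sub_nonneg.mpr ht)
          (show (0:ℝ) ≤ (j:ℝ) - 1/3 + 2 * x by linarith))]
    · have hj : j ≤ -1 := by omega
      have ht : (1 : ℝ) ≤ -(j : ℝ) := by
        have : (j : ℝ) ≤ -1 := by exact_mod_cast hj
        linarith
      have htn : ((-(j : ℤ) - 1).toNat : ℝ) = -(j : ℝ) - 1 := by
        have : ((-(j : ℤ) - 1).toNat : ℤ) = -j - 1 := by omega
        exact_mod_cast congrArg (Int.cast : ℤ → ℝ) this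
      have hj1' : ¬ (1 : ℤ) ≤ j := by omega
      simp only [hm, if_neg hj0, if_neg hj1']
      rw [hB, hG0, hRdef, ← Real.exp_add, show r ^ (-(j:ℤ) - 1).toNat
          = Real.exp (((-(j:ℤ) - 1).toNat : ℝ) * (-(4 * a / 3))) by
            rw [Real.exp_nat_mul], htn, ← Real.exp_add]
      apply Real.exp_le_exp.mpr
      nlinarith [mul_nonneg ha0.le (mul_nonneg (sub_nonneg.mpr ht)
          (show (0:ℝ) ≤ -(j:ℝ) - 1/3 - 2 * x by linarith))]
  have hgsum : Summable (fun j : ℤ => Real.exp (-(a * (x + j) ^ 2))) :=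
    Summable.of_nonneg_of_le (fun j => (Real.exp_pos _).le) hle hmsum.summable
  -- rewrite the statement sums
  have hexp : ∀ j : ℤ, -π * (x + j) ^ 2 * K ^ 2 / σ ^ 2 = -(a * (x + j) ^ 2) := by
    intro j; rw [ha]; ring
  have hexp0 : -π * x ^ 2 * K ^ 2 / σ ^ 2 = -(a * x ^ 2) := by rw [ha]; ring
  have hS : (∑' j : ℤ, (K / σ) * Real.exp (-π * (x + j) ^ 2 * K ^ 2 / σ ^ 2))
      = (K / σ) * ∑' j : ℤ, Real.exp (-(a * (x + j) ^ 2)) := by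
    rw [← tsum_mul_left]
    exact tsum_congr fun j => by rw [hexp j]
  have hKσ : (0:ℝ) ≤ K / σ := by positivity
  have hg0 : Real.exp (-(a * (x + (0:ℤ)) ^ 2)) = G0 := by norm_num [hG0]
  constructor
  · rw [hS, hexp0]
    apply mul_le_mul_of_nonneg_left _ hKσ
    calc Real.exp (-(a * x ^ 2)) = Real.exp (-(a * (x + (0:ℤ)) ^ 2)) := by norm_num
    _ ≤ ∑' j : ℤ, Real.exp (-(a * (x + j) ^ 2)) :=
        Summable.le_tsum hgsum 0 fun j _ => (Real.exp_pos _).le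
  · rw [hS, hexp0]
    have hε : ((10:ℝ) ^ (-(4:ℤ)) : ℝ) = 1/10000 := by norm_num
    rw [hε]
    have htsle : (∑' j : ℤ, Real.exp (-(a * (x + j) ^ 2)))
        ≤ G0 + A * (1 - r)⁻¹ + B * (1 - r)⁻¹ := by
      rw [← hmsum.tsum_eq]; exact Summable.tsum_le_tsum hle hgsum hmsum.summable
    -- key numeric bound : L + R ≤ (1/10000) * (1 - r)
    have hkey : L + R ≤ (1/10000) * (1 - r) := by
      have := key_numeric a x ha9 ha0 hx1 hx2
      rw [← hL, ← hRdef, ← hrdef] at this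
      exact this
    have hG0pos : 0 < G0 := Real.exp_pos _
    have htail : A * (1 - r)⁻¹ + B * (1 - r)⁻¹ ≤ (1/10000) * G0 := by
      have : A * (1 - r)⁻¹ + B * (1 - r)⁻¹ = G0 * (L + R) * (1 - r)⁻¹ := by
        rw [hA, hB]; ring
      rw [this]
      calc G0 * (L + R) * (1 - r)⁻¹
          ≤ G0 * ((1/10000) * (1 - r)) * (1 - r)⁻¹ := by
            apply mul_le_mul_of_nonneg_right _ (inv_nonneg.mpr h1r.le)
            exact mul_le_mul_of_nonneg_left hkey hG0pos.le
      _ = (1/10000) * G0 := by field_simp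
    calc (K / σ) * ∑' j : ℤ, Real.exp (-(a * (x + j) ^ 2))
        ≤ (K / σ) * (G0 + A * (1 - r)⁻¹ + B * (1 - r)⁻¹) :=
          mul_le_mul_of_nonneg_left htsle hKσ
    _ ≤ (K / σ) * ((1 + 1/10000) * G0) := by
          apply mul_le_mul_of_nonneg_left _ hKσ; linarith
    _ = (1 + 1/10000) * ((K / σ) * G0) := by ring
end

section
/- Let φ_p(x) = Σ_{j∈ℤ} (K/σ)·exp(−π (x+j)² K²/σ²) with K ≥ 3σ > 0. Then φ_p is nonincreasing on [0, 1/2] and nondecreasing on [−1/2, 0]. -/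
open Real Set
set_option maxHeartbeats 1000000

namespace PGM

variable {a : ℝ}

lemma sumgeo {g : ℕ → ℝ} {C : ℝ} (h0 : ∀ n, 0 ≤ g n) (h : ∀ n, g n ≤ C * (1/2)^n) :
    Summable g :=
  Summable.of_nonneg_of_le h0 h (summable_geometric_two.mul_left C)

lemma decay1 (ha : 28 ≤ a) (n : ℕ) {t : ℝ} (h1 : (n:ℝ) - 2 ≤ t) :
    Real.exp (-a * t^2) ≤ Real.exp 57 * (1/4)^n := by
  have ha0 : (0:ℝ) < a := by linarith
  by_cases hn : n ≤ 2
  · have h2 : Real.exp (-a * t^2) ≤ 1 := by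
      rw [Real.exp_le_one_iff]
      nlinarith [sq_nonneg t]
    have h4 : ((1:ℝ)/4)^2 ≤ (1/4)^n := by
      apply pow_le_pow_of_le_one (by norm_num) (by norm_num) hn
    have h57 : (16:ℝ) ≤ Real.exp 57 := by
      nlinarith [Real.add_one_le_exp (57:ℝ)]
    calc Real.exp (-a*t^2) ≤ 1 := h2
      _ ≤ Real.exp 57 * (1/4)^n := by nlinarith
  · push_neg at hn
    have h3 : (1:ℝ) ≤ (n:ℝ) - 2 := by
      have : (3:ℕ) ≤ n := hn
      have := Nat.cast_le (α := ℝ) |>.2 this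
      push_cast at this ⊢; linarith
    have ht1 : (1:ℝ) ≤ t := le_trans h3 h1
    have hsq : ((n:ℝ)-2)^2 ≤ t^2 := by nlinarith
    have key : Real.exp (-a*t^2) ≤ Real.exp (-28*((n:ℝ)-2)) := by
      rw [Real.exp_le_exp]
      nlinarith
    have e4 : Real.exp (-(28:ℝ)) ≤ 1/4 := by
      rw [Real.exp_neg, inv_le_comm₀ (Real.exp_pos _) (by norm_num)]
      nlinarith [Real.add_one_le_exp (28:ℝ)]
    have split : Real.exp (-28*((n:ℝ)-2)) = Real.exp 56 * (Real.exp (-28))^n := by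
      rw [← Real.exp_nat_mul, ← Real.exp_add]
      ring_nf
    have pw : (Real.exp (-28:ℝ))^n ≤ (1/4)^n :=
      pow_le_pow_left₀ (Real.exp_pos _).le e4 n
    have e56 : Real.exp (56:ℝ) ≤ Real.exp 57 := by
      rw [Real.exp_le_exp]; norm_num
    calc Real.exp (-a*t^2) ≤ Real.exp 56 * (Real.exp (-28))^n := by rw [← split]; exact key
      _ ≤ Real.exp 57 * (1/4)^n := by
          apply mul_le_mul e56 pw (pow_nonneg (Real.exp_pos _).le n) (Real.exp_pos _).le

lemma pow_aux : ∀ n:ℕ, ((n:ℝ) + 2) ≤ 2 * 2^n := by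
  intro n
  induction n with
  | zero => norm_num
  | succ k ih =>
    have h1 : (1:ℝ) ≤ 2^k := one_le_pow₀ (by norm_num)
    push_cast
    push_cast at ih
    rw [pow_succ]
    nlinarith

lemma decay2 (ha : 28 ≤ a) (n : ℕ) {t b : ℝ} (h1 : (n:ℝ) - 2 ≤ t) (hb0 : 0 ≤ b)
    (hb : b ≤ (n:ℝ) + 2) :
    b * Real.exp (-a * t^2) ≤ (2 * Real.exp 57) * (1/2)^n := by
  have d1 := decay1 ha n h1
  have pa := pow_aux n
  have hE : (0:ℝ) ≤ Real.exp (-a*t^2) := (Real.exp_pos _).le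
  have step : b * Real.exp (-a*t^2) ≤ (2*2^n) * (Real.exp 57 * (1/4)^n) := by
    apply mul_le_mul (hb.trans pa) d1 hE (by positivity)
  calc b * Real.exp (-a*t^2) ≤ (2*2^n) * (Real.exp 57 * (1/4)^n) := step
    _ = (2 * Real.exp 57) * (1/2)^n := by
        rw [show ((1:ℝ)/2)^n = 2^n * (1/4)^n by rw [← mul_pow]; norm_num]
        ring

lemma hA (ha : 28 ≤ a) {u v : ℝ} (hu : 1/4 ≤ u) (huv : u ≤ v) :
    v * Real.exp (-a * v^2) ≤ u * Real.exp (-a * u^2) := by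
  have key : v ≤ u * Real.exp (a * (v^2 - u^2)) := by
    have h1 : a * (v^2-u^2) + 1 ≤ Real.exp (a * (v^2-u^2)) := by
      have := Real.add_one_le_exp (a * (v^2-u^2)); linarith
    have hau : 7 ≤ a * u := by nlinarith
    have h6 : 1 ≤ a * u * (v + u) := by nlinarith
    have h7 : (v - u) * 1 ≤ (v - u) * (a * u * (v+u)) :=
      mul_le_mul_of_nonneg_left h6 (by linarith)
    have h2 : v ≤ u * (a * (v^2-u^2) + 1) := by nlinarith [h7]
    calc v ≤ u * (a*(v^2-u^2)+1) := h2
      _ ≤ u * Real.exp (a*(v^2-u^2)) := by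
          apply mul_le_mul_of_nonneg_left h1 (by linarith)
  have hE : (0:ℝ) < Real.exp (-a*v^2) := Real.exp_pos _
  calc v * Real.exp (-a*v^2) ≤ (u * Real.exp (a*(v^2-u^2))) * Real.exp (-a*v^2) :=
        mul_le_mul_of_nonneg_right key hE.le
    _ = u * Real.exp (-a*u^2) := by
        rw [mul_assoc, ← Real.exp_add]; ring_nf

lemma eight_a (ha : 28 ≤ a) : 8 * a ≤ Real.exp (a/2) := by
  have h1 : Real.exp (a/2) = (Real.exp (a/8))^4 := by
    rw [← Real.exp_nat_mul]; congr 1; push_cast; ring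
  have h2 : 1 + a/8 ≤ Real.exp (a/8) := by linarith [Real.add_one_le_exp (a/8)]
  have h3 : (0:ℝ) ≤ 1 + a/8 := by linarith
  have h4 : (1 + a/8)^4 ≤ (Real.exp (a/8))^4 := pow_le_pow_left₀ h3 h2 4
  have h5 : 8 * a ≤ (1 + a/8)^4 := by nlinarith [sq_nonneg (a-28), sq_nonneg a]
  linarith [h1 ▸ h4]

/-- The basic summand: `pp a t n = (t+n) exp(-a (t+n)^2)`. -/
noncomputable def pp (a t : ℝ) (n : ℕ) : ℝ := (t + (n:ℝ)) * Real.exp (-a * (t + (n:ℝ))^2)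

lemma pp_nonneg (a : ℝ) {t : ℝ} (h0 : 0 ≤ t) (n : ℕ) : 0 ≤ pp a t n :=
  mul_nonneg (by have := Nat.cast_nonneg (α := ℝ) n; linarith) (Real.exp_pos _).le

lemma summable_pp (ha : 28 ≤ a) {t : ℝ} (h0 : 0 ≤ t) (h1 : t ≤ 2) : Summable (pp a t) := by
  apply sumgeo (C := 2 * Real.exp 57) (pp_nonneg a h0)
  intro n
  exact decay2 ha n (by have := Nat.cast_nonneg (α := ℝ) n; linarith)
    (by have := Nat.cast_nonneg (α := ℝ) n; linarith) (by linarith)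

lemma pp_mono (ha : 28 ≤ a) {t s : ℝ} {nt ns : ℕ} (h14 : 1/4 ≤ t + (nt:ℝ))
    (h2 : t + (nt:ℝ) ≤ s + (ns:ℝ)) : pp a s ns ≤ pp a t nt :=
  hA ha h14 h2

lemma crux (ha : 28 ≤ a) {x : ℝ} (hx0 : 0 ≤ x) (hx2 : x ≤ 1/2) :
    0 ≤ ∑' j : ℤ, (x + (j:ℝ)) * Real.exp (-a * (x + (j:ℝ))^2) := by
  have ha0 : (0:ℝ) < a := by linarith
  have hp : Summable (pp a x) := summable_pp ha hx0 (by linarith)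
  have hq : Summable (pp a (1-x)) := summable_pp ha (by linarith) (by linarith)
  have hr : Summable (pp a (1+x)) := summable_pp ha (by linarith) (by linarith)
  set f : ℤ → ℝ := fun j => (x + (j:ℝ)) * Real.exp (-a * (x + (j:ℝ))^2) with hfdef
  have hf₁ : HasSum (fun n : ℕ => f (n:ℤ)) (∑' n, pp a x n) := by
    have heq : (fun n : ℕ => f (n:ℤ)) = pp a x := by
      funext n; simp only [hfdef, pp]; push_cast; ring_nf
    rw [heq]; exact hp.hasSum
  have hf₂ : HasSum (fun n : ℕ => f (-((n:ℤ)+1))) (-∑' n, pp a (1-x) n) := by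
    have heq : (fun n : ℕ => f (-((n:ℤ)+1))) = fun n => -(pp a (1-x) n) := by
      funext n; simp only [hfdef, pp]; push_cast; ring_nf
    rw [heq]; exact hq.hasSum.neg
  have htot : HasSum f ((∑' n, pp a x n) + -∑' n, pp a (1-x) n) :=
    HasSum.of_nat_of_neg_add_one hf₁ hf₂
  rw [htot.tsum_eq, ← sub_eq_add_neg, sub_nonneg]
  have hsplit : ∑' n, pp a x n = pp a x 0 + ∑' n, pp a x (n+1) := Summable.tsum_eq_zero_add hp
  have hpr : (fun n : ℕ => pp a x (n+1)) = pp a (1+x) := by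
    funext n; simp only [pp]; push_cast; ring_nf
  rw [hsplit, hpr]
  have hqr : Summable (fun n => pp a (1-x) n - pp a (1+x) n) := hq.sub hr
  have hDsum : ∑' n, pp a (1-x) n - ∑' n, pp a (1+x) n
      = ∑' n, (pp a (1-x) n - pp a (1+x) n) := (Summable.tsum_sub hq hr).symm
  have hp0 : pp a x 0 = x * Real.exp (-a * x^2) := by simp only [pp]; push_cast; ring_nf
  have hgoal : ∑' n, (pp a (1-x) n - pp a (1+x) n) ≤ pp a x 0 := by
    rcases le_or_gt x (1/4) with hx4 | hx4
    · -- small x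
      have term : ∀ n : ℕ, pp a (1-x) n - pp a (1+x) n
          ≤ (4*a*x*Real.exp (-(9/16)*a)) * (1/2)^n := by
        intro n
        have hn0 : (0:ℝ) ≤ (n:ℝ) := Nat.cast_nonneg n
        set m : ℝ := (n:ℝ) + 1 with hm
        clear_value m
        have hm1 : (1:ℝ) ≤ m := by rw [hm]; linarith
        have hqn : pp a (1-x) n = (m - x) * Real.exp (-a * (m-x)^2) := by
          simp only [pp]; rw [hm]; ring_nf
        have hrn : pp a (1+x) n = (m + x) * Real.exp (-a * (m+x)^2) := by
          simp only [pp]; rw [hm]; ring_nf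
        set E₁ := Real.exp (-a * (m-x)^2) with hE₁
        set E₂ := Real.exp (-a * (m+x)^2) with hE₂
        have hE₁pos : 0 < E₁ := Real.exp_pos _
        have hE₂pos : 0 < E₂ := Real.exp_pos _
        clear_value E₁ E₂
        have hE2eq : E₂ = E₁ * Real.exp (-(4*a*m*x)) := by
          rw [hE₁, hE₂, ← Real.exp_add]; congr 1; ring
        have h1e : 1 - Real.exp (-(4*a*m*x)) ≤ 4*a*m*x := by
          have := Real.add_one_le_exp (-(4*a*m*x)); linarith
        have step1 : pp a (1-x) n - pp a (1+x) n ≤ m * (E₁ - E₂) := by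
          rw [hqn, hrn]; nlinarith
        have step2 : m * (E₁ - E₂) ≤ 4*a*m^2*x*E₁ := by
          rw [hE2eq]
          have h3 : E₁ * (1 - Real.exp (-(4*a*m*x))) ≤ E₁ * (4*a*m*x) :=
            mul_le_mul_of_nonneg_left h1e hE₁pos.le
          calc m * (E₁ - E₁ * Real.exp (-(4*a*m*x)))
              = m * (E₁ * (1 - Real.exp (-(4*a*m*x)))) := by ring
            _ ≤ m * (E₁ * (4*a*m*x)) := mul_le_mul_of_nonneg_left h3 (by linarith)
            _ = 4*a*m^2*x*E₁ := by ring
        have h4 : (m - 1/4)^2 ≤ (m - x)^2 := by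
          nlinarith [mul_nonneg (by linarith : (0:ℝ) ≤ 1/4 - x)
            (by linarith : (0:ℝ) ≤ 2*m - x - 1/4)]
        have step3 : E₁ ≤ Real.exp (-a * (m - 1/4)^2) := by
          rw [hE₁, Real.exp_le_exp]
          nlinarith [mul_le_mul_of_nonneg_left h4 ha0.le]
        set W : ℝ := (n:ℝ) * ((n:ℝ) + 3/2) with hW
        clear_value W
        have hWnn : 0 ≤ W := by rw [hW]; positivity
        have hsplit2 : Real.exp (-a * (m-1/4)^2)
            = Real.exp (-(9/16)*a) * Real.exp (-(a * W)) := by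
          rw [← Real.exp_add]; congr 1; rw [hm, hW]; ring
        have hmexp : m ≤ Real.exp (n:ℝ) := by
          rw [hm]; linarith [Real.add_one_le_exp (n:ℝ)]
        have h2n : ((2:ℝ))^n ≤ Real.exp (n:ℝ) := by
          calc ((2:ℝ))^n ≤ (Real.exp 1)^n :=
                pow_le_pow_left₀ (by norm_num) (by linarith [Real.add_one_le_exp (1:ℝ)]) n
            _ = Real.exp (n:ℝ) := by rw [← Real.exp_nat_mul]; ring_nf
        have hm2 : m^2 * (2:ℝ)^n ≤ Real.exp (a * W) := by
          have h5 : m^2 * (2:ℝ)^n ≤ (Real.exp (n:ℝ))^2 * Real.exp (n:ℝ) :=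
            mul_le_mul (pow_le_pow_left₀ (by linarith) hmexp 2) h2n (by positivity) (by positivity)
          have h6 : (Real.exp (n:ℝ))^2 * Real.exp (n:ℝ) = Real.exp (3*(n:ℝ)) := by
            rw [sq, ← Real.exp_add, ← Real.exp_add]; ring_nf
          have h7 : Real.exp (3*(n:ℝ)) ≤ Real.exp (a * W) := by
            rw [Real.exp_le_exp, hW]; nlinarith
          calc m^2 * (2:ℝ)^n ≤ (Real.exp (n:ℝ))^2 * Real.exp (n:ℝ) := h5
            _ = Real.exp (3*(n:ℝ)) := h6
            _ ≤ Real.exp (a * W) := h7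
        have key : m^2 * Real.exp (-(a * W)) ≤ (1/2)^n := by
          have h2npos : (0:ℝ) < 2^n := by positivity
          rw [Real.exp_neg, ← div_eq_mul_inv,
            show ((1:ℝ)/2)^n = 1/2^n by rw [div_pow, one_pow],
            div_le_div_iff₀ (Real.exp_pos _) h2npos]
          linarith
        have step4 : m^2 * Real.exp (-a * (m-1/4)^2) ≤ Real.exp (-(9/16)*a) * (1/2)^n := by
          rw [hsplit2]
          calc m^2 * (Real.exp (-(9/16)*a) * Real.exp (-(a*W)))
              = Real.exp (-(9/16)*a) * (m^2 * Real.exp (-(a*W))) := by ring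
            _ ≤ Real.exp (-(9/16)*a) * (1/2)^n :=
                mul_le_mul_of_nonneg_left key (Real.exp_pos _).le
        have step5 : 4*a*m^2*x*E₁ ≤ (4*a*x*Real.exp (-(9/16)*a)) * (1/2)^n := by
          have h8 : m^2 * E₁ ≤ Real.exp (-(9/16)*a) * (1/2)^n := by
            calc m^2 * E₁ ≤ m^2 * Real.exp (-a * (m-1/4)^2) :=
                  mul_le_mul_of_nonneg_left step3 (by positivity)
              _ ≤ Real.exp (-(9/16)*a) * (1/2)^n := step4
          calc 4*a*m^2*x*E₁ = (4*a*x) * (m^2 * E₁) := by ring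
            _ ≤ (4*a*x) * (Real.exp (-(9/16)*a) * (1/2)^n) :=
                mul_le_mul_of_nonneg_left h8 (by positivity)
            _ = (4*a*x*Real.exp (-(9/16)*a)) * (1/2)^n := by ring
        linarith
      have hsum2 : Summable (fun n:ℕ => (4*a*x*Real.exp (-(9/16)*a)) * (1/2)^n) :=
        summable_geometric_two.mul_left _
      have hle := Summable.tsum_le_tsum term hqr hsum2
      rw [tsum_mul_left, tsum_geometric_two] at hle
      have e8 := eight_a ha
      have h9 : 8*a*Real.exp (-(9/16)*a) ≤ Real.exp (-(1/16)*a) := by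
        have h10 : Real.exp (a/2) * Real.exp (-(9/16)*a) = Real.exp (-(1/16)*a) := by
          rw [← Real.exp_add]; congr 1; ring
        nlinarith [Real.exp_pos (-(9/16)*a)]
      have hx216 : x^2 ≤ 1/16 := by nlinarith
      have h11 : Real.exp (-(1/16)*a) ≤ Real.exp (-a*x^2) := by
        rw [Real.exp_le_exp]
        nlinarith [mul_le_mul_of_nonneg_left hx216 ha0.le]
      rw [hp0]
      have h12 : x * Real.exp (-(1/16)*a) ≤ x * Real.exp (-a*x^2) :=
        mul_le_mul_of_nonneg_left h11 hx0
      have h13 : x * (8*a*Real.exp (-(9/16)*a)) ≤ x * Real.exp (-(1/16)*a) :=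
        mul_le_mul_of_nonneg_left h9 hx0
      nlinarith
    · -- large x
      rw [Summable.tsum_eq_zero_add hqr]
      have hq1r0 : pp a (1-x) 1 ≤ pp a (1+x) 0 :=
        pp_mono ha (by push_cast; linarith) (by push_cast; linarith)
      have hq0p0 : pp a (1-x) 0 ≤ pp a x 0 :=
        pp_mono ha (by push_cast; linarith) (by push_cast; linarith)
      have htail : ∑' n, (pp a (1-x) (n+1) - pp a (1+x) (n+1)) ≤ pp a (1-x) 1 := by
        apply Summable.tsum_le_of_sum_le ((summable_nat_add_iff (f := fun n => pp a (1-x) n - pp a (1+x) n) 1).2 hqr)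
        intro s
        obtain ⟨N, hN⟩ := s.exists_nat_subset_range
        have dnn : ∀ i:ℕ, 0 ≤ pp a (1-x) (i+1) - pp a (1+x) (i+1) := by
          intro i
          have := pp_mono (nt := i+1) (ns := i+1) (t := 1-x) (s := 1+x) ha
            (by push_cast; linarith) (by push_cast; linarith)
          linarith
        have step : ∀ i:ℕ, pp a (1-x) (i+1) - pp a (1+x) (i+1)
            ≤ pp a (1-x) (i+1) - pp a (1-x) (i+1+1) := by
          intro i
          have := pp_mono (nt := i+1) (ns := i+1+1) (t := 1+x) (s := 1-x) ha
            (by push_cast; linarith) (by push_cast; linarith)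
          linarith
        calc ∑ n ∈ s, (pp a (1-x) (n+1) - pp a (1+x) (n+1))
            ≤ ∑ n ∈ Finset.range N, (pp a (1-x) (n+1) - pp a (1+x) (n+1)) :=
              Finset.sum_le_sum_of_subset_of_nonneg hN (fun i _ _ => dnn i)
          _ ≤ ∑ n ∈ Finset.range N, ((fun i => pp a (1-x) (i+1)) n
                - (fun i => pp a (1-x) (i+1)) (n+1)) :=
              Finset.sum_le_sum (fun i _ => step i)
          _ = pp a (1-x) (0+1) - pp a (1-x) (N+1) :=
              Finset.sum_range_sub' (fun i => pp a (1-x) (i+1)) N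
          _ ≤ pp a (1-x) 1 := by
              have := pp_nonneg a (t := 1-x) (by linarith) (N+1)
              linarith
      have hd0 : pp a (1-x) 0 - pp a (1+x) 0 + ∑' n, (pp a (1-x) (n+1) - pp a (1+x) (n+1))
          ≤ pp a x 0 := by linarith
      exact hd0
  linarith [hDsum, hgoal]

lemma hasDeriv_term (a c : ℝ) (j : ℤ) (x : ℝ) :
    HasDerivAt (fun y : ℝ => c * Real.exp (-a * (y + (j:ℝ))^2))
      ((-(2*a*c)) * ((x + (j:ℝ)) * Real.exp (-a * (x + (j:ℝ))^2))) x := by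
  have h1 : HasDerivAt (fun y : ℝ => y + (j:ℝ)) 1 x := (hasDerivAt_id x).add_const _
  have h2 : HasDerivAt (fun y : ℝ => (y + (j:ℝ))^2) (2*(x+(j:ℝ))) x := by
    simpa using h1.fun_pow 2
  have h3 : HasDerivAt (fun y : ℝ => -a * (y + (j:ℝ))^2) (-a * (2*(x+(j:ℝ)))) x :=
    h2.const_mul (-a)
  have h4 := h3.exp
  have h5 := h4.const_mul c
  exact h5.congr_deriv (by ring)

lemma deriv_bound (ha : 28 ≤ a) {c : ℝ} (hc : 0 < c) (j : ℤ) {y : ℝ} (hy : |y| ≤ 1) :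
    ‖(-(2*a*c)) * ((y + (j:ℝ)) * Real.exp (-a * (y + (j:ℝ))^2))‖
      ≤ (2*a*c*Real.exp a) * ((|(j:ℝ)| + 1) * Real.exp (-a * (|(j:ℝ)| - 1)^2)) := by
  have ha0 : (0:ℝ) < a := by linarith
  have hyj : |y + (j:ℝ)| ≤ |(j:ℝ)| + 1 := by
    calc |y + (j:ℝ)| ≤ |y| + |(j:ℝ)| := abs_add_le _ _
      _ ≤ |(j:ℝ)| + 1 := by linarith
  have hj1 : |(j:ℝ)| - 1 ≤ |y + (j:ℝ)| := by
    have h2 : |(j:ℝ)| ≤ |y + (j:ℝ)| + |y| := by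
      calc |(j:ℝ)| = |(y + (j:ℝ)) + -y| := by ring_nf
        _ ≤ |y + (j:ℝ)| + |-y| := abs_add_le _ _
        _ = |y + (j:ℝ)| + |y| := by rw [abs_neg]
    linarith
  have hsq : (|(j:ℝ)| - 1)^2 ≤ (y + (j:ℝ))^2 + 1 := by
    rcases le_or_gt (|(j:ℝ)|) 1 with h | h
    · have h0 : (0:ℝ) ≤ |(j:ℝ)| := abs_nonneg _
      nlinarith [sq_nonneg (y + (j:ℝ))]
    · have h0 : (0:ℝ) ≤ |(j:ℝ)| - 1 := by linarith
      have := sq_abs (y + (j:ℝ))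
      nlinarith [pow_le_pow_left₀ h0 hj1 2]
  have hexp : Real.exp (-a * (y + (j:ℝ))^2) ≤ Real.exp a * Real.exp (-a * (|(j:ℝ)| - 1)^2) := by
    rw [← Real.exp_add, Real.exp_le_exp]
    nlinarith [mul_le_mul_of_nonneg_left hsq ha0.le]
  rw [Real.norm_eq_abs, abs_mul, abs_mul, abs_neg, abs_of_pos (by positivity : (0:ℝ) < 2*a*c),
    abs_of_pos (Real.exp_pos _)]
  have hmain : |y + (j:ℝ)| * Real.exp (-a * (y + (j:ℝ))^2)
      ≤ (|(j:ℝ)| + 1) * (Real.exp a * Real.exp (-a * (|(j:ℝ)| - 1)^2)) :=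
    mul_le_mul hyj hexp (Real.exp_pos _).le (by positivity)
  calc (2*a*c) * (|y + (j:ℝ)| * Real.exp (-a * (y + (j:ℝ))^2))
      ≤ (2*a*c) * ((|(j:ℝ)| + 1) * (Real.exp a * Real.exp (-a * (|(j:ℝ)| - 1)^2))) :=
        mul_le_mul_of_nonneg_left hmain (by positivity)
    _ = (2*a*c*Real.exp a) * ((|(j:ℝ)| + 1) * Real.exp (-a * (|(j:ℝ)| - 1)^2)) := by ring

lemma summable_u (ha : 28 ≤ a) (c : ℝ) :
    Summable (fun j : ℤ => (2*a*c*Real.exp a) * ((|(j:ℝ)| + 1) * Real.exp (-a * (|(j:ℝ)| - 1)^2))) := by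
  apply Summable.mul_left
  have base : Summable (fun n : ℕ => ((n:ℝ) + 1) * Real.exp (-a * ((n:ℝ) - 1)^2)) := by
    apply sumgeo (C := 2 * Real.exp 57) (fun n => by positivity)
    intro n
    exact decay2 ha n (by have := Nat.cast_nonneg (α := ℝ) n; linarith) (by positivity)
      (by have := Nat.cast_nonneg (α := ℝ) n; linarith)
  apply Summable.of_nat_of_neg
  · refine base.congr fun n => ?_
    rw [show |((n:ℤ):ℝ)| = (n:ℝ) by push_cast; exact abs_of_nonneg (Nat.cast_nonneg n)]
  · refine base.congr fun n => ?_
    rw [show |((-(n:ℤ):ℤ):ℝ)| = (n:ℝ) by push_cast; rw [abs_neg]; exact abs_of_nonneg (Nat.cast_nonneg n)]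

lemma summable_at_zero (ha : 28 ≤ a) (c : ℝ) :
    Summable (fun j : ℤ => c * Real.exp (-a * ((0:ℝ) + (j:ℝ))^2)) := by
  apply Summable.mul_left
  have base : Summable (fun n : ℕ => Real.exp (-a * ((0:ℝ) + (n:ℝ))^2)) := by
    apply sumgeo (C := Real.exp 57) (fun n => (Real.exp_pos _).le)
    intro n
    calc Real.exp (-a * ((0:ℝ) + (n:ℝ))^2) ≤ Real.exp 57 * (1/4)^n :=
          decay1 ha n (by have := Nat.cast_nonneg (α := ℝ) n; linarith)
      _ ≤ Real.exp 57 * (1/2)^n := by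
          apply mul_le_mul_of_nonneg_left _ (Real.exp_pos _).le
          apply pow_le_pow_left₀ (by norm_num) (by norm_num)
  apply Summable.of_nat_of_neg
  · exact base
  · refine base.congr fun n => ?_
    push_cast
    ring_nf

theorem main_aux {a c : ℝ} (ha : 28 ≤ a) (hc : 0 < c) :
    AntitoneOn (fun x : ℝ => ∑' j : ℤ, c * Real.exp (-a * (x + (j:ℝ))^2)) (Icc (0:ℝ) (1/2)) ∧
    MonotoneOn (fun x : ℝ => ∑' j : ℤ, c * Real.exp (-a * (x + (j:ℝ))^2)) (Icc (-(1/2):ℝ) 0) := by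
  have ha0 : (0:ℝ) < a := by linarith
  set F := fun x : ℝ => ∑' j : ℤ, c * Real.exp (-a * (x + (j:ℝ))^2) with hF
  have hder : ∀ y ∈ Ioo (-1:ℝ) 1, HasDerivAt F
      (∑' j : ℤ, (-(2*a*c)) * ((y + (j:ℝ)) * Real.exp (-a * (y + (j:ℝ))^2))) y := by
    intro y hy
    exact hasDerivAt_tsum_of_isPreconnected (summable_u ha c) isOpen_Ioo
      (convex_Ioo _ _).isPreconnected
      (fun j z _ => hasDeriv_term a c j z)
      (fun j z hz => deriv_bound ha hc j (abs_le.2 ⟨hz.1.le, hz.2.le⟩))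
      (by norm_num : (0:ℝ) ∈ Ioo (-1:ℝ) 1)
      (summable_at_zero ha c) hy
  have hmem : ∀ z ∈ Icc (0:ℝ) (1/2), z ∈ Ioo (-1:ℝ) 1 := fun z hz =>
    ⟨by linarith [hz.1], by linarith [hz.2]⟩
  have hanti : AntitoneOn F (Icc (0:ℝ) (1/2)) := by
    apply antitoneOn_of_deriv_nonpos (convex_Icc _ _)
    · exact fun z hz => ((hder z (hmem z hz)).continuousAt).continuousWithinAt
    · rw [interior_Icc]
      exact fun z hz => ((hder z (hmem z (Ioo_subset_Icc_self hz))).differentiableAt).differentiableWithinAt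
    · rw [interior_Icc]
      intro z hz
      rw [(hder z (hmem z (Ioo_subset_Icc_self hz))).deriv]
      rw [tsum_mul_left]
      apply mul_nonpos_of_nonpos_of_nonneg (by nlinarith)
      exact crux ha hz.1.le hz.2.le
  have heven : ∀ t : ℝ, F (-t) = F t := by
    intro t
    have h := (Equiv.neg ℤ).tsum_eq (fun j : ℤ => c * Real.exp (-a * (t + (j:ℝ))^2))
    calc F (-t) = ∑' j : ℤ, c * Real.exp (-a * (t + (((Equiv.neg ℤ) j : ℤ):ℝ))^2) := by
          rw [hF]
          apply tsum_congr
          intro j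
          have : ((Equiv.neg ℤ) j : ℤ) = -j := rfl
          rw [this]
          push_cast
          ring_nf
      _ = F t := h
  refine ⟨hanti, ?_⟩
  intro x hx y hy hxy
  have hx' : -x ∈ Icc (0:ℝ) (1/2) := ⟨by linarith [hx.2], by linarith [hx.1]⟩
  have hy' : -y ∈ Icc (0:ℝ) (1/2) := ⟨by linarith [hy.2], by linarith [hy.1]⟩
  have hle := hanti hy' hx' (by linarith)
  calc F x = F (-x) := (heven x).symm
    _ ≤ F (-y) := hle
    _ = F y := heven y

end PGM

open PGM in
theorem periodized_gaussian_monotone (σ K : ℝ) (hσ : 0 < σ) (h3 : 3 * σ ≤ K) :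
    AntitoneOn (fun x : ℝ => ∑' j : ℤ, (K / σ) * Real.exp (-π * (x + j) ^ 2 * K ^ 2 / σ ^ 2))
      (Icc (0 : ℝ) (1/2)) ∧
    MonotoneOn (fun x : ℝ => ∑' j : ℤ, (K / σ) * Real.exp (-π * (x + j) ^ 2 * K ^ 2 / σ ^ 2))
      (Icc (-(1/2) : ℝ) 0) := by
  have hσ2 : (0:ℝ) < σ^2 := by positivity
  have hπ := Real.pi_gt_d6
  have hK0 : 0 < K := by linarith
  have h9 : (9:ℝ) ≤ K^2/σ^2 := by
    rw [le_div_iff₀ hσ2]; nlinarith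
  have ha : (28:ℝ) ≤ π * K^2 / σ^2 := by
    have : π * K^2 / σ^2 = π * (K^2/σ^2) := by ring
    rw [this]
    nlinarith [h9, hπ]
  have hc : (0:ℝ) < K/σ := by positivity
  have hfun : (fun x : ℝ => ∑' j : ℤ, (K / σ) * Real.exp (-π * (x + j) ^ 2 * K ^ 2 / σ ^ 2))
      = fun x : ℝ => ∑' j : ℤ, (K / σ) * Real.exp (-(π * K^2 / σ^2) * (x + (j:ℝ))^2) := by
    funext x
    apply tsum_congr
    intro j
    congr 1
    ring_nf
  rw [hfun]
  exact main_aux ha hc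
end

section
/- Let σ, K > 0 with K ≥ 3σ, and φ_p(x) = Σ_{j∈ℤ} (K/σ)·exp(−π(x+j)²K²/σ²). Then Σ_{k∈ℤ} exp(−π(kσ/K)²) = φ_p(0) ≤ (1 + 10⁻⁴)·K/σ. -/
open Real

lemma gauss_tail_aux (c : ℝ) (hc : 28 ≤ c) :
    (∑' j : ℤ, Real.exp (-c * (j : ℝ) ^ 2)) ≤ 1 + 10 ^ (-(4:ℤ)) := by
  have hc0 : (0:ℝ) < c := by linarith
  set r : ℝ := Real.exp (-c) with hr
  have hr0 : 0 ≤ r := (Real.exp_pos _).le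
  have hr1 : r < 1 := by
    rw [hr, Real.exp_lt_one_iff]; linarith
  -- pointwise bounds
  have key : ∀ n : ℕ, Real.exp (-c * (n : ℝ) ^ 2) ≤ r ^ n := by
    intro n
    rw [hr, ← Real.exp_nat_mul]
    apply Real.exp_le_exp.mpr
    have : (n : ℝ) ≤ (n : ℝ) ^ 2 := by
      exact_mod_cast Nat.le_self_pow (by norm_num) n
    nlinarith
  have hsum_geo : Summable (fun n : ℕ => r ^ n) := summable_geometric_of_lt_one hr0 hr1
  have hs1 : Summable (fun n : ℕ => Real.exp (-c * ((n : ℤ) : ℝ) ^ 2)) := by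
    apply Summable.of_nonneg_of_le (fun n => (Real.exp_pos _).le) _ hsum_geo
    intro n; simpa using key n
  have hs2 : Summable (fun n : ℕ => Real.exp (-c * ((-(n + 1) : ℤ) : ℝ) ^ 2)) := by
    apply Summable.of_nonneg_of_le (fun n => (Real.exp_pos _).le) _ hsum_geo
    intro n
    have : ((-(n + 1) : ℤ) : ℝ) ^ 2 = ((n + 1 : ℕ) : ℝ) ^ 2 := by push_cast; ring
    rw [this]
    calc Real.exp (-c * ((n + 1 : ℕ) : ℝ) ^ 2) ≤ r ^ (n + 1) := key (n + 1)
      _ ≤ r ^ n := pow_le_pow_of_le_one hr0 hr1.le (by omega)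
  have hsplit := tsum_of_nat_of_neg_add_one (f := fun j : ℤ => Real.exp (-c * (j : ℝ) ^ 2)) hs1 hs2
  rw [hsplit]
  -- bound each part
  have hb1 : (∑' n : ℕ, Real.exp (-c * ((n : ℤ) : ℝ) ^ 2)) ≤ (1 - r)⁻¹ := by
    rw [← tsum_geometric_of_lt_one hr0 hr1]
    apply Summable.tsum_le_tsum _ hs1 hsum_geo
    intro n; simpa using key n
  have hb2 : (∑' n : ℕ, Real.exp (-c * ((-(n + 1) : ℤ) : ℝ) ^ 2)) ≤ r * (1 - r)⁻¹ := by
    have hgeo' : Summable (fun n : ℕ => r * r ^ n) := hsum_geo.mul_left r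
    calc (∑' n : ℕ, Real.exp (-c * ((-(n + 1) : ℤ) : ℝ) ^ 2))
        ≤ ∑' n : ℕ, r * r ^ n := by
          apply Summable.tsum_le_tsum _ hs2 hgeo'
          intro n
          have h2 : ((-(n + 1) : ℤ) : ℝ) ^ 2 = ((n + 1 : ℕ) : ℝ) ^ 2 := by push_cast; ring
          rw [h2, ← pow_succ']
          exact key (n + 1)
      _ = r * (1 - r)⁻¹ := by rw [tsum_mul_left, tsum_geometric_of_lt_one hr0 hr1]
  -- numeric bound on r
  have h2e : (2:ℝ) ≤ Real.exp 1 := by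
    have := Real.add_one_le_exp (1:ℝ); linarith
  have hrsmall : r ≤ ((2:ℝ) ^ 28)⁻¹ := by
    have h1 : r ≤ Real.exp (-28) := Real.exp_le_exp.mpr (by linarith)
    have h2 : Real.exp (-28) = (Real.exp 1 ^ 28)⁻¹ := by
      rw [← Real.exp_nat_mul, ← Real.exp_neg]; norm_num
    have h3 : (2:ℝ) ^ 28 ≤ Real.exp 1 ^ 28 := pow_le_pow_left₀ (by norm_num) h2e 28
    have h4 : (Real.exp 1 ^ 28)⁻¹ ≤ ((2:ℝ) ^ 28)⁻¹ := by
      apply inv_anti₀ (by positivity) h3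
    linarith [h2 ▸ h1]
  have hrhalf : r ≤ 1/2 := by
    have : ((2:ℝ) ^ 28)⁻¹ ≤ 1/2 := by norm_num
    linarith
  have hinvb : (1 - r)⁻¹ ≤ 1 + 2 * r := by
    rw [inv_le_iff_one_le_mul₀ (by linarith)]
    nlinarith
  have hfinal : (1 - r)⁻¹ + r * (1 - r)⁻¹ ≤ 1 + 10 ^ (-(4:ℤ)) := by
    have hinv0 : (0:ℝ) < (1 - r)⁻¹ := inv_pos.mpr (by linarith)
    have : (10:ℝ) ^ (-(4:ℤ)) = 1/10000 := by norm_num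
    rw [this]
    nlinarith [hrsmall, hr0, hinvb, mul_le_mul_of_nonneg_left hinvb hr0]
  calc (∑' n : ℕ, Real.exp (-c * ((n : ℤ) : ℝ) ^ 2)) +
        ∑' n : ℕ, Real.exp (-c * ((-(n + 1) : ℤ) : ℝ) ^ 2)
      ≤ (1 - r)⁻¹ + r * (1 - r)⁻¹ := add_le_add hb1 hb2
    _ ≤ 1 + 10 ^ (-(4:ℤ)) := hfinal

theorem poisson_summation_periodized_gaussian (σ K : ℝ) (hσ : 0 < σ) (h3 : 3 * σ ≤ K) :
    (∑' k : ℤ, Real.exp (-π * (k * σ / K) ^ 2)) =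
      (∑' j : ℤ, (K / σ) * Real.exp (-π * ((0:ℝ) + j) ^ 2 * K ^ 2 / σ ^ 2)) ∧
    (∑' j : ℤ, (K / σ) * Real.exp (-π * ((0:ℝ) + j) ^ 2 * K ^ 2 / σ ^ 2)) ≤
      (1 + 10 ^ (-(4:ℤ))) * (K / σ) := by
  have hK : 0 < K := by linarith
  have hq : 0 < σ / K := div_pos hσ hK
  have ha : (0:ℝ) < (σ / K) ^ 2 := by positivity
  have hps := Real.tsum_exp_neg_mul_int_sq ha
  have hroot : (((σ / K) ^ 2 : ℝ)) ^ ((1:ℝ)/2) = σ / K := by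
    rw [← Real.rpow_natCast (σ / K) 2, ← Real.rpow_mul hq.le]
    norm_num
  have hL : (∑' k : ℤ, Real.exp (-π * ((k : ℝ) * σ / K) ^ 2)) =
      ∑' n : ℤ, Real.exp (-π * (σ / K) ^ 2 * (n : ℝ) ^ 2) := by
    apply tsum_congr; intro k; ring_nf
  have hR : (∑' j : ℤ, (K / σ) * Real.exp (-π * ((0:ℝ) + (j : ℝ)) ^ 2 * K ^ 2 / σ ^ 2)) =
      (K / σ) * ∑' n : ℤ, Real.exp (-π / (σ / K) ^ 2 * (n : ℝ) ^ 2) := by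
    rw [tsum_mul_left]
    congr 1
    apply tsum_congr; intro j
    congr 1
    field_simp
    ring
  have heq : (∑' k : ℤ, Real.exp (-π * ((k : ℝ) * σ / K) ^ 2)) =
      ∑' j : ℤ, (K / σ) * Real.exp (-π * ((0:ℝ) + (j : ℝ)) ^ 2 * K ^ 2 / σ ^ 2) := by
    rw [hL, hR, hps, hroot, one_div_div]
  refine ⟨heq, ?_⟩
  rw [hR]
  have hc : (28:ℝ) ≤ π * K ^ 2 / σ ^ 2 := by
    have hpi : (3.14:ℝ) ≤ π := by linarith [Real.pi_gt_d6]
    have h9 : 9 * σ ^ 2 ≤ K ^ 2 := by nlinarith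
    rw [le_div_iff₀ (by positivity)]
    nlinarith [mul_le_mul_of_nonneg_left h9 (by linarith : (0:ℝ) ≤ π), sq_nonneg σ]
  have hsum_le : (∑' n : ℤ, Real.exp (-π / (σ / K) ^ 2 * (n : ℝ) ^ 2)) ≤ 1 + 10 ^ (-(4:ℤ)) := by
    have harg : ∀ n : ℤ, -π / (σ / K) ^ 2 * (n : ℝ) ^ 2 = -(π * K ^ 2 / σ ^ 2) * (n : ℝ) ^ 2 := by
      intro n; field_simp
    calc (∑' n : ℤ, Real.exp (-π / (σ / K) ^ 2 * (n : ℝ) ^ 2))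
        = ∑' n : ℤ, Real.exp (-(π * K ^ 2 / σ ^ 2) * (n : ℝ) ^ 2) := by
          apply tsum_congr; intro n; rw [harg]
      _ ≤ 1 + 10 ^ (-(4:ℤ)) := gauss_tail_aux _ hc
  have hKσ : (0:ℝ) < K / σ := div_pos hK hσ
  calc (K / σ) * ∑' n : ℤ, Real.exp (-π / (σ / K) ^ 2 * (n : ℝ) ^ 2)
      ≤ (K / σ) * (1 + 10 ^ (-(4:ℤ))) := by
        apply mul_le_mul_of_nonneg_left hsum_le hKσ.le
    _ = (1 + 10 ^ (-(4:ℤ))) * (K / σ) := by ring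
end

section
/- Under the real-line setting (f_* = Σ_s w_s δ_{x_s} + r on ℝ, w_s ≥ β, r(ℝ) ≤ ω < β, |y(k) − f̂_*(k)| ≤ ε ≤ (β−ω)/6 on [−K,K], σ = √((1/π)log(6/(β−ω)))), every point x of the estimated set X_e = {x : |∫_{|k|≤K} y(k)e^{−π(kσ/K)²}e^{2πikx} dk| > (2β+ω)K/(3σ)} satisfies dist(x, {x_1,…,x_S}) ≤ τ/K, where τ = (1/π)log(6/(β−ω)). -/
open Real MeasureTheory Set

lemma shift_Ioi (c : ℝ) (g : ℝ → ℝ) :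
    ∫ x in Ioi c, g (x - c) = ∫ x in Ioi (0:ℝ), g x := by
  have A : MeasurableEmbedding fun x : ℝ => x + (-c) :=
    (Homeomorph.addRight (-c)).isClosedEmbedding.measurableEmbedding
  have h := A.setIntegral_map (μ := volume) g (Ioi (0:ℝ))
  rw [map_add_right_eq_self volume (-c)] at h
  have hpre : (fun x : ℝ => x + (-c)) ⁻¹' Ioi (0:ℝ) = Ioi c := by
    ext z; simp [Set.mem_Ioi]
  rw [hpre] at h
  simp only [sub_eq_add_neg]
  exact h.symm

lemma tail_Ioi {b : ℝ} (hb : 0 < b) {K : ℝ} (hK : 0 ≤ K) :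
    ∫ k in Ioi K, Real.exp (-b*k^2) ≤ Real.exp (-b*K^2) * (Real.sqrt (π/b)/2) := by
  have hshift : ∫ k in Ioi K, Real.exp (-b*(k-K)^2) = ∫ k in Ioi (0:ℝ), Real.exp (-b*k^2) :=
    shift_Ioi K (fun v => Real.exp (-b*v^2))
  have hint : Integrable (fun k : ℝ => Real.exp (-b*k^2)) := integrable_exp_neg_mul_sq hb
  have hint2 : Integrable (fun k : ℝ => Real.exp (-b*K^2) * Real.exp (-b*(k-K)^2)) := by
    exact ((hint.comp_sub_right K).const_mul _)
  have hmono : ∫ k in Ioi K, Real.exp (-b*k^2)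
      ≤ ∫ k in Ioi K, Real.exp (-b*K^2) * Real.exp (-b*(k-K)^2) := by
    apply setIntegral_mono_on hint.integrableOn hint2.integrableOn measurableSet_Ioi
    intro k hk
    rw [← Real.exp_add]
    apply Real.exp_le_exp.2
    have hk' : K ≤ k := le_of_lt (Set.mem_Ioi.1 hk)
    nlinarith [mul_nonneg (mul_nonneg hb.le hK) (sub_nonneg.2 hk')]
  calc ∫ k in Ioi K, Real.exp (-b*k^2) ≤ _ := hmono
    _ = Real.exp (-b*K^2) * ∫ k in Ioi K, Real.exp (-b*(k-K)^2) := by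
        rw [← integral_const_mul]
    _ = Real.exp (-b*K^2) * (Real.sqrt (π/b)/2) := by
        rw [hshift, integral_gaussian_Ioi]

lemma tail_compl {b K : ℝ} (hb : 0 < b) (hK : 0 ≤ K) :
    ∫ k in (Icc (-K) K)ᶜ, Real.exp (-b*k^2)
      ≤ Real.exp (-b*K^2) * Real.sqrt (π/b) := by
  have hint : Integrable (fun k : ℝ => Real.exp (-b*k^2)) := integrable_exp_neg_mul_sq hb
  have heven : ∫ k in Iic (-K), Real.exp (-b*k^2) = ∫ k in Ioi K, Real.exp (-b*k^2) := by
    have := integral_comp_neg_Iic (-K) (fun k : ℝ => Real.exp (-b*k^2))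
    simp only [neg_sq, neg_neg] at this
    exact this
  have hIio : ∫ k in Iio (-K), Real.exp (-b*k^2) = ∫ k in Iic (-K), Real.exp (-b*k^2) := by
    rw [integral_Iic_eq_integral_Iio]
  have hcompl : (Icc (-K) K)ᶜ = Iio (-K) ∪ Ioi K := by
    ext z
    simp only [mem_compl_iff, mem_Icc, not_and_or, not_le, mem_union, mem_Iio, mem_Ioi]
  rw [hcompl]
  rw [setIntegral_union (by
        apply Set.disjoint_left.2; intro a ha ha'
        simp only [mem_Iio] at ha; simp only [mem_Ioi] at ha'
        linarith) measurableSet_Ioi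
      hint.integrableOn hint.integrableOn]
  rw [hIio, heven]
  have := tail_Ioi hb hK
  linarith


lemma gauss_fourier {b : ℝ} (hb : 0 < b) (u : ℝ) :
    ∫ k : ℝ, (Real.exp (-b*k^2) : ℂ) * Complex.exp (2*π*Complex.I*k*u)
      = ((Real.sqrt (π/b) * Real.exp (-(π^2*u^2/b)) : ℝ) : ℂ) := by
  have hbc : (0:ℝ) < ((b:ℂ)).re := by simpa using hb
  have h := fourierIntegral_gaussian (b := (b:ℂ)) hbc (((2*π*u : ℝ)) : ℂ)
  calc ∫ k : ℝ, (Real.exp (-b*k^2) : ℂ) * Complex.exp (2*π*Complex.I*k*u)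
      = ∫ k : ℝ, Complex.exp (Complex.I * ((2*π*u:ℝ):ℂ) * k) * Complex.exp (-(b:ℂ)*k^2) := by
        congr 1; funext k
        rw [mul_comm]
        congr 1
        · congr 1; push_cast; ring
        · rw [Complex.ofReal_exp]; congr 1; push_cast; ring
    _ = (π/(b:ℂ))^(1/2:ℂ) * Complex.exp (-((2*π*u:ℝ):ℂ)^2/(4*(b:ℂ))) := h
    _ = _ := by
        rw [show ((π:ℂ)/(b:ℂ)) = ((π/b : ℝ):ℂ) by push_cast; ring,
            show (1/2:ℂ) = ((1/2:ℝ):ℂ) by norm_num,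
            ← Complex.ofReal_cpow (le_of_lt (div_pos pi_pos hb)),
            show (-((2*π*u:ℝ):ℂ)^2/(4*(b:ℂ))) = ((-(π^2*u^2/b) : ℝ):ℂ) by
              have : (b:ℂ) ≠ 0 := by exact_mod_cast hb.ne'
              push_cast; field_simp; ring]
        rw [← Complex.ofReal_exp, ← Complex.ofReal_mul]
        congr 2
        rw [Real.sqrt_eq_rpow]

set_option maxHeartbeats 1000000 in
theorem real_line_estimated_set_near_spikes
    (S : ℕ) (w : Fin S → ℝ) (xs : Fin S → ℝ) (r : Measure ℝ)
    (β ω ε K : ℝ) (hK : 0 < K) (hω : 0 ≤ ω) (hβω : ω < β) (hβ1 : β ≤ 1)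
    (hε : 0 ≤ ε) (hε6 : ε ≤ (β - ω) / 6)
    (hw : ∀ s, β ≤ w s)
    (f : Measure ℝ)
    (hf : f = (∑ s : Fin S, ENNReal.ofReal (w s) • Measure.dirac (xs s)) + r)
    (hprob : IsProbabilityMeasure f)
    (hr : r Set.univ ≤ ENNReal.ofReal ω)
    (y : ℝ → ℂ)
    (hy : ∀ k : ℝ, |k| ≤ K →
      ‖(y k - ∫ t, Complex.exp (-(2 * π * Complex.I * t * k)) ∂f)‖ ≤ ε)
    (σ τ : ℝ) (hσ : σ = Real.sqrt ((1 / π) * Real.log (6 / (β - ω))))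
    (hτ : τ = (1 / π) * Real.log (6 / (β - ω))) :
    ∀ x : ℝ,
      (2 * β + ω) * K / (3 * σ) <
        ‖(∫ k in Icc (-K) K, y k * Real.exp (-π * (k * σ / K) ^ 2) *
          Complex.exp (2 * π * Complex.I * k * x))‖ →
      ∃ s : Fin S, |x - xs s| ≤ τ / K := by
  intro x hx
  by_contra hcon
  push_neg at hcon
  haveI := hprob
  -- basic numeric facts
  have hβω' : 0 < β - ω := sub_pos.2 hβω
  have hβpos : 0 < β := lt_of_le_of_lt hω hβω
  have h6 : (0:ℝ) < 6/(β-ω) := by positivity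
  have h61 : 1 < 6/(β-ω) := by rw [lt_div_iff₀ hβω']; linarith
  have hτpos : 0 < τ := by
    rw [hτ]
    have := Real.log_pos h61
    positivity
  have hστ : σ = Real.sqrt τ := by rw [hσ, hτ]
  have hσ2 : σ^2 = τ := by rw [hστ, Real.sq_sqrt hτpos.le]
  have hσpos : 0 < σ := by rw [hστ]; exact Real.sqrt_pos.2 hτpos
  have hexpτ : Real.exp (-(π*τ)) = (β-ω)/6 := by
    rw [hτ, show π * ((1/π) * Real.log (6/(β-ω))) = Real.log (6/(β-ω)) by
      field_simp]
    rw [Real.exp_neg, Real.exp_log h6, inv_div]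
  set b : ℝ := π*σ^2/K^2 with hbdef
  have hb : 0 < b := by positivity
  have hbK : b*K^2 = π*τ := by rw [hbdef, ← hσ2]; field_simp
  have hsqrtb : Real.sqrt (π/b) = K/σ := by
    rw [show π/b = (K/σ)^2 by rw [hbdef]; field_simp]
    exact Real.sqrt_sq (by positivity)
  have hKσpos : 0 < K/σ := by positivity
  -- rewrite the Gaussian factor
  have hGarg : ∀ k : ℝ, -π*(k*σ/K)^2 = -b*k^2 := by
    intro k; rw [hbdef]; field_simp
  simp only [hGarg] at hx
  have hthr : 0 < (2*β+ω)*K/(3*σ) := by positivity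
  -- notation
  set G : ℝ → ℝ := fun k => Real.exp (-b*k^2) with hGdef
  set F : ℝ → ℂ := fun k => ∫ t, Complex.exp (-(2*π*Complex.I*t*k)) ∂f with hFdef
  set e : ℝ → ℝ → ℂ := fun k u => Complex.exp (2*π*Complex.I*k*u) with hedef
  have hGint : Integrable G := integrable_exp_neg_mul_sq hb
  have hGnn : ∀ k, 0 ≤ G k := fun k => (Real.exp_pos _).le
  have hG1 : ∀ k, G k ≤ 1 := fun k => Real.exp_le_one_iff.2 (by nlinarith [sq_nonneg k])
  have hIccG_le : ∫ k in Icc (-K) K, G k ≤ K/σ := by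
    calc ∫ k in Icc (-K) K, G k ≤ ∫ k, G k :=
          setIntegral_le_integral hGint (Filter.Eventually.of_forall hGnn)
      _ = Real.sqrt (π/b) := integral_gaussian b
      _ = K/σ := hsqrtb
  have hexpbK : Real.exp (-b*K^2) = (β-ω)/6 := by
    rw [show -b*K^2 = -(b*K^2) by ring, hbK, hexpτ]
  have htail : ∫ k in (Icc (-K) K)ᶜ, G k ≤ (β-ω)/6 * (K/σ) := by
    have := tail_compl hb hK.le
    rw [hexpbK, hsqrtb] at this
    exact this
  -- norm of the complex integrand equals G
  have hnormGe : ∀ k u : ℝ, ‖(G k : ℂ) * e k u‖ = G k := by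
    intro k u
    rw [norm_mul]
    simp only [hedef, Complex.norm_exp, Complex.norm_real]
    rw [show (2*(π:ℂ)*Complex.I*(k:ℂ)*(u:ℂ)).re = 0 by simp]
    simp [abs_of_nonneg (hGnn k)]
  -- complex Gaussian integrand integrable
  have hGeint : ∀ u : ℝ, Integrable (fun k => (G k : ℂ) * e k u) := by
    intro u
    apply Integrable.mono' hGint (Continuous.aestronglyMeasurable (by fun_prop))
    exact Filter.Eventually.of_forall fun k => le_of_eq (hnormGe k u)
  -- the window function
  set g : ℝ → ℂ := fun u => ∫ k in Icc (-K) K, (G k : ℂ) * e k u with hgdef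
  have hg_all : ∀ u : ℝ, ‖g u‖ ≤ K/σ := by
    intro u
    calc ‖g u‖ ≤ ∫ k in Icc (-K) K, ‖(G k : ℂ) * e k u‖ := norm_integral_le_integral_norm _
      _ = ∫ k in Icc (-K) K, G k := by
          apply setIntegral_congr_fun measurableSet_Icc; intro k _; exact hnormGe k u
      _ ≤ K/σ := hIccG_le
  have hfull : ∀ u : ℝ, ∫ k, (G k : ℂ) * e k u
      = ((K/σ * Real.exp (-(π^2*u^2/b)) : ℝ) : ℂ) := by
    intro u
    rw [← hsqrtb]
    exact gauss_fourier hb u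
  have hg_far : ∀ u : ℝ, τ/K < |u| → ‖g u‖ ≤ (β-ω)/3 * (K/σ) := by
    intro u hu
    have hsplit : g u = (∫ k, (G k : ℂ) * e k u) - ∫ k in (Icc (-K) K)ᶜ, (G k : ℂ) * e k u := by
      rw [← integral_add_compl measurableSet_Icc (hGeint u)]; ring
    rw [hsplit]
    have h1 : ‖∫ k, (G k : ℂ) * e k u‖ ≤ (β-ω)/6 * (K/σ) := by
      rw [hfull u, Complex.norm_real, Real.norm_of_nonneg (by positivity)]
      have hu2 : (τ/K)^2 < u^2 := by
        have h0 : 0 ≤ τ/K := by positivity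
        calc (τ/K)^2 < |u|^2 := by
              apply pow_lt_pow_left₀ hu h0
              norm_num
          _ = u^2 := sq_abs u
      have h3 : τ^2 < u^2*K^2 := by
        rw [div_pow] at hu2
        exact (div_lt_iff₀ (by positivity)).1 hu2
      have harg : π*τ ≤ π^2*u^2/b := by
        rw [show π^2*u^2/b = π*u^2*K^2/τ by rw [hbdef, ← hσ2]; field_simp,
            le_div_iff₀ hτpos]
        nlinarith [pi_pos]
      have hE : Real.exp (-(π^2*u^2/b)) ≤ (β-ω)/6 := by
        rw [← hexpτ]
        exact Real.exp_le_exp.2 (by linarith)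
      have := mul_le_mul_of_nonneg_left hE hKσpos.le
      linarith
    have h2 : ‖∫ k in (Icc (-K) K)ᶜ, (G k : ℂ) * e k u‖ ≤ (β-ω)/6 * (K/σ) := by
      calc ‖∫ k in (Icc (-K) K)ᶜ, (G k : ℂ) * e k u‖
          ≤ ∫ k in (Icc (-K) K)ᶜ, ‖(G k : ℂ) * e k u‖ := norm_integral_le_integral_norm _
        _ = ∫ k in (Icc (-K) K)ᶜ, G k := by
            apply setIntegral_congr_fun measurableSet_Icc.compl; intro k _; exact hnormGe k u
        _ ≤ (β-ω)/6 * (K/σ) := htail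
    calc ‖_ - _‖ ≤ _ := norm_sub_le _ _
      _ ≤ (β-ω)/6 * (K/σ) + (β-ω)/6 * (K/σ) := add_le_add h1 h2
      _ = (β-ω)/3 * (K/σ) := by ring
  -- continuity of g
  have hgcont : Continuous g := by
    rw [hgdef]
    apply continuous_of_dominated (bound := G)
    · intro u
      exact Continuous.aestronglyMeasurable (by simp only [hedef]; fun_prop)
    · intro u
      exact Filter.Eventually.of_forall fun k => le_of_eq (hnormGe k u)
    · exact hGint.integrableOn
    · exact Filter.Eventually.of_forall fun k => by simp only [hedef]; fun_prop
  -- norm of e is 1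
  have hnorme : ∀ k u : ℝ, ‖e k u‖ = 1 := by
    intro k u
    simp only [hedef, Complex.norm_exp]
    rw [show (2*(π:ℂ)*Complex.I*(k:ℂ)*(u:ℂ)).re = 0 by simp]
    simp
  -- continuity and boundedness of F
  have hFcont : Continuous F := by
    rw [hFdef]
    apply continuous_of_dominated (bound := fun _ : ℝ => (1:ℝ))
    · intro k
      exact Continuous.aestronglyMeasurable (by fun_prop)
    · intro k
      apply Filter.Eventually.of_forall
      intro t
      rw [Complex.norm_exp]
      simp
    · exact integrable_const 1
    · exact Filter.Eventually.of_forall fun t => by fun_prop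
  have hFbound : ∀ k : ℝ, ‖F k‖ ≤ 1 := by
    intro k
    calc ‖F k‖ ≤ ∫ t, ‖Complex.exp (-(2*π*Complex.I*t*k))‖ ∂f :=
          norm_integral_le_integral_norm _
      _ = ∫ t, (1:ℝ) ∂f := by
          congr 1; funext t
          rw [Complex.norm_exp]
          simp
      _ = 1 := by simp
  -- FGe integrable on the window
  have hFGe : IntegrableOn (fun k => F k * ↑(G k) * e k x) (Icc (-K) K) := by
    apply Integrable.mono' hGint.integrableOn
    · exact Continuous.aestronglyMeasurable (by
        apply Continuous.mul
        apply Continuous.mul hFcont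
        · exact Complex.continuous_ofReal.comp (by simp only [hGdef]; fun_prop)
        · simp only [hedef]; fun_prop)
    · apply Filter.Eventually.of_forall
      intro k
      rw [norm_mul, norm_mul, hnorme k x, mul_one, Complex.norm_real,
        Real.norm_of_nonneg (hGnn k)]
      exact mul_le_of_le_one_left (hGnn k) (hFbound k)
  -- the premise with local notation
  have hx' : (2*β+ω)*K/(3*σ) < ‖(∫ k in Icc (-K) K, y k * ↑(G k) * e k x)‖ := by
    simp only [hGdef, hedef]
    exact hx
  -- integrability of the y-integrand
  by_cases hyint : IntegrableOn (fun k => y k * ↑(G k) * e k x) (Icc (-K) K)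
  swap
  · rw [integral_undef hyint] at hx'
    simp only [norm_zero] at hx'
    linarith
  -- split off the error term
  have hsplit : ∫ k in Icc (-K) K, y k * ↑(G k) * e k x
      = (∫ k in Icc (-K) K, (y k - F k) * ↑(G k) * e k x)
        + ∫ k in Icc (-K) K, F k * ↑(G k) * e k x := by
    have h2 : (fun k => (y k - F k) * ↑(G k) * e k x)
        = fun k => y k * ↑(G k) * e k x - F k * ↑(G k) * e k x := by
      funext k; ring
    rw [h2, integral_sub hyint hFGe]
    ring
  have hT1 : ‖∫ k in Icc (-K) K, (y k - F k) * ↑(G k) * e k x‖ ≤ (β-ω)/6 * (K/σ) := by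
    calc ‖∫ k in Icc (-K) K, (y k - F k) * ↑(G k) * e k x‖
        ≤ ∫ k in Icc (-K) K, ‖(y k - F k) * ↑(G k) * e k x‖ := norm_integral_le_integral_norm _
      _ ≤ ∫ k in Icc (-K) K, ε * G k := by
          have hsub : Integrable (fun k => (y k - F k) * ↑(G k) * e k x)
              (volume.restrict (Icc (-K) K)) :=
            (Integrable.sub hyint hFGe).congr
              (Filter.Eventually.of_forall fun k => by simp only [Pi.sub_apply]; ring)
          apply setIntegral_mono_on hsub.norm
            ((hGint.const_mul ε).integrableOn) measurableSet_Icc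
          intro k hk
          rw [norm_mul, norm_mul, hnorme k x, mul_one, Complex.norm_real,
            Real.norm_of_nonneg (hGnn k)]
          have hk' : |k| ≤ K := abs_le.2 ⟨hk.1, hk.2⟩
          have h1 : ‖y k - F k‖ ≤ ε := hy k hk'
          exact mul_le_mul_of_nonneg_right h1 (hGnn k)
      _ = ε * ∫ k in Icc (-K) K, G k := integral_const_mul ε _
      _ ≤ ε * (K/σ) := mul_le_mul_of_nonneg_left hIccG_le hε
      _ ≤ (β-ω)/6 * (K/σ) := mul_le_mul_of_nonneg_right hε6 hKσpos.le
  -- Fubini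
  haveI hfinIcc : IsFiniteMeasure (volume.restrict (Icc (-K) K)) :=
    ⟨by rw [Measure.restrict_apply_univ]; exact isCompact_Icc.measure_lt_top⟩
  have hprod : Integrable (Function.uncurry fun k t : ℝ => (G k : ℂ) * e k (x - t))
      ((volume.restrict (Icc (-K) K)).prod f) := by
    rw [show (Function.uncurry fun k t : ℝ => (G k : ℂ) * e k (x - t))
        = fun p : ℝ × ℝ => (G p.1 : ℂ) * e p.1 (x - p.2) from rfl]
    apply Integrable.mono' (integrable_const (1:ℝ))
    · exact Continuous.aestronglyMeasurable (by simp only [hGdef, hedef]; fun_prop)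
    · apply Filter.Eventually.of_forall
      intro p
      rw [hnormGe p.1 (x - p.2)]
      exact hG1 p.1
  have hT2eq : ∫ k in Icc (-K) K, F k * ↑(G k) * e k x = ∫ t, g (x - t) ∂f := by
    have hpt : ∀ k : ℝ, F k * ↑(G k) * e k x = ∫ t, (G k : ℂ) * e k (x - t) ∂f := by
      intro k
      rw [hFdef]
      rw [← integral_mul_const, ← integral_mul_const]
      congr 1; funext t
      simp only [hedef]
      rw [show (2*(π:ℂ)*Complex.I*(k:ℂ)*((x - t : ℝ):ℂ))
          = -(2*π*Complex.I*t*k) + 2*π*Complex.I*k*x by push_cast; ring, Complex.exp_add]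
      ring
    calc ∫ k in Icc (-K) K, F k * ↑(G k) * e k x
        = ∫ k in Icc (-K) K, ∫ t, (G k : ℂ) * e k (x - t) ∂f := by
          apply setIntegral_congr_fun measurableSet_Icc
          intro k _; exact hpt k
      _ = ∫ t, (∫ k in Icc (-K) K, (G k : ℂ) * e k (x - t)) ∂f :=
          integral_integral_swap hprod
      _ = ∫ t, g (x - t) ∂f := rfl
  -- decompose the measure
  have hgfint : Integrable (fun t => g (x - t)) f := by
    apply Integrable.mono' (integrable_const (K/σ))
      ((hgcont.comp (continuous_const.sub continuous_id)).aestronglyMeasurable)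
    exact Filter.Eventually.of_forall fun t => hg_all (x - t)
  have hsumle : (∑ s : Fin S, ENNReal.ofReal (w s) • Measure.dirac (xs s)) ≤ f := by
    rw [hf]; exact Measure.le_add_right (le_refl _)
  have hrle : r ≤ f := by
    rw [hf]; exact Measure.le_add_left (le_refl _)
  have hgsum : Integrable (fun t => g (x - t))
      (∑ s : Fin S, ENNReal.ofReal (w s) • Measure.dirac (xs s)) :=
    hgfint.mono_measure hsumle
  have hgr : Integrable (fun t => g (x - t)) r := hgfint.mono_measure hrle
  have hgs : ∀ s : Fin S, Integrable (fun t => g (x - t))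
      (ENNReal.ofReal (w s) • Measure.dirac (xs s)) := fun s =>
    hgsum.mono_measure (by
      intro A
      rw [Measure.finset_sum_apply]
      exact Finset.single_le_sum
        (f := fun i => (ENNReal.ofReal (w i) • Measure.dirac (xs i)) A)
        (fun i _ => zero_le) (Finset.mem_univ s))
  have hwnn : ∀ s : Fin S, (0:ℝ) ≤ w s := fun s => le_trans hβpos.le (hw s)
  have hdecomp : ∫ t, g (x - t) ∂f
      = (∑ s : Fin S, w s • g (x - xs s)) + ∫ t, g (x - t) ∂r := by
    rw [hf, integral_add_measure hgsum hgr, integral_finset_sum_measure (fun i _ => hgs i)]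
    congr 1
    apply Finset.sum_congr rfl
    intro s _
    rw [integral_smul_measure, integral_dirac, ENNReal.toReal_ofReal (hwnn s)]
  -- sum of weights is at most one
  have hW : ∑ s : Fin S, w s ≤ 1 := by
    have h1 := hprob.measure_univ
    rw [hf, Measure.add_apply, Measure.finset_sum_apply] at h1
    simp only [Measure.smul_apply, Measure.dirac_apply_of_mem (Set.mem_univ _),
      smul_eq_mul, mul_one] at h1
    have h2 : ∑ s : Fin S, ENNReal.ofReal (w s) ≤ 1 := by
      rw [← h1]; exact le_self_add
    rw [← ENNReal.ofReal_sum_of_nonneg (fun s _ => hwnn s)] at h2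
    exact ENNReal.ofReal_le_one.1 h2
  have hspike : ‖∑ s : Fin S, w s • g (x - xs s)‖ ≤ (β-ω)/3 * (K/σ) := by
    calc ‖∑ s : Fin S, w s • g (x - xs s)‖ ≤ ∑ s : Fin S, ‖w s • g (x - xs s)‖ :=
          norm_sum_le _ _
      _ ≤ ∑ s : Fin S, w s * ((β-ω)/3 * (K/σ)) := by
          apply Finset.sum_le_sum
          intro s _
          rw [norm_smul, Real.norm_of_nonneg (hwnn s)]
          exact mul_le_mul_of_nonneg_left (hg_far (x - xs s) (hcon s)) (hwnn s)
      _ = (∑ s : Fin S, w s) * ((β-ω)/3 * (K/σ)) := by rw [← Finset.sum_mul]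
      _ ≤ 1 * ((β-ω)/3 * (K/σ)) := mul_le_mul_of_nonneg_right hW (by positivity)
      _ = (β-ω)/3 * (K/σ) := one_mul _
  haveI hrfin : IsFiniteMeasure r := ⟨lt_of_le_of_lt hr ENNReal.ofReal_lt_top⟩
  have hres : ‖∫ t, g (x - t) ∂r‖ ≤ ω * (K/σ) := by
    calc ‖∫ t, g (x - t) ∂r‖ ≤ (K/σ) * (r Set.univ).toReal :=
          norm_integral_le_of_norm_le_const (Filter.Eventually.of_forall fun t => hg_all (x - t))
      _ ≤ (K/σ) * ω := mul_le_mul_of_nonneg_left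
          (ENNReal.toReal_le_of_le_ofReal hω hr) hKσpos.le
      _ = ω * (K/σ) := mul_comm _ _
  -- combine
  have hfinal : ‖(∫ k in Icc (-K) K, y k * ↑(G k) * e k x)‖ ≤ (2*β+ω)*K/(3*σ) := by
    rw [hsplit]
    calc ‖(∫ k in Icc (-K) K, (y k - F k) * ↑(G k) * e k x)
          + ∫ k in Icc (-K) K, F k * ↑(G k) * e k x‖
        ≤ ‖∫ k in Icc (-K) K, (y k - F k) * ↑(G k) * e k x‖
          + ‖∫ k in Icc (-K) K, F k * ↑(G k) * e k x‖ := norm_add_le _ _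
      _ ≤ (β-ω)/6 * (K/σ) + ((β-ω)/3 * (K/σ) + ω * (K/σ)) := by
          apply add_le_add hT1
          rw [hT2eq, hdecomp]
          calc ‖(∑ s : Fin S, w s • g (x - xs s)) + ∫ t, g (x - t) ∂r‖
              ≤ ‖∑ s : Fin S, w s • g (x - xs s)‖ + ‖∫ t, g (x - t) ∂r‖ := norm_add_le _ _
            _ ≤ (β-ω)/3 * (K/σ) + ω * (K/σ) := add_le_add hspike hres
      _ ≤ (2*β+ω)*K/(3*σ) := by
          rw [show (2*β+ω)*K/(3*σ) = ((2*β+ω)/3)*(K/σ) by ring]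
          nlinarith [mul_nonneg (show (0:ℝ) ≤ (β-ω)/6 by positivity) hKσpos.le, hKσpos]
  exact absurd hx' (not_lt.2 hfinal)
end

section
/- Let f_* = Σ_{s=1}^S w_s δ_{x_s} + r be a probability measure on the torus 𝕋 = ℝ/ℤ with w_s ≥ β > 0 and r nonnegative with r(𝕋) ≤ ω < β. Let y(k), |k| ≤ K integer, satisfy |y(k) − f̂_*(k)| ≤ ε where f̂_*(k) = ∫_𝕋 e^{−2πixk} df_*(x). Let σ = √((1/π)log(12/(β−ω))), φ̂_p(k) = exp(−π(kσ/K)²), and g(x) = Σ_{|k|≤K} y(k)φ̂_p(k)e^{2πikx}. Then for all x ∈ 𝕋, |g(x) − (φ_p * f_*)(x)| < (ε + exp(−πσ²))·φ_p(0), where φ_p is the periodized Gaussian with Fourier coefficients φ̂_p(k). -/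
open Real MeasureTheory Set

open Real MeasureTheory Set
open scoped ENNReal NNReal

lemma aux_summable_exp_sq {a : ℝ} (ha : 0 < a) :
    Summable fun k : ℤ => Real.exp (-(a * (k : ℝ) ^ 2)) := by
  have hnat : Summable fun n : ℕ => Real.exp (-(a * (n : ℝ) ^ 2)) := by
    refine Summable.of_nonneg_of_le (fun n => (Real.exp_pos _).le) (fun n => ?_)
      (summable_geometric_of_lt_one (Real.exp_pos (-a)).le
        (Real.exp_lt_one_iff.mpr (by linarith)))
    rw [← Real.exp_nat_mul]
    apply Real.exp_le_exp.mpr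
    have h1 : (n : ℝ) ≤ (n : ℝ) ^ 2 := by
      have := Nat.le_self_pow (two_ne_zero) n
      exact_mod_cast this
    nlinarith
  refine Summable.of_nat_of_neg hnat (hnat.congr fun n => ?_)
  congr 1
  push_cast
  ring

lemma aux_poisson (σ Kr : ℝ) (hσ : 0 < σ) (hK : 0 < Kr) (u : ℝ) :
    ∑' k : ℤ, ((Real.exp (-π * ((k : ℝ) * σ / Kr) ^ 2) : ℝ) : ℂ) *
        Complex.exp (2 * π * Complex.I * (k : ℂ) * (u : ℂ)) =
      ((∑' j : ℤ, (Kr / σ) * Real.exp (-π * (u + (j : ℝ)) ^ 2 * Kr ^ 2 / σ ^ 2) : ℝ) : ℂ) := by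
  have ha : (0 : ℝ) < ((σ / Kr) ^ 2 : ℝ) := by positivity
  have ha' : 0 < ((((σ / Kr) ^ 2 : ℝ) : ℂ)).re := by
    rw [Complex.ofReal_re]; exact ha
  have key := Complex.tsum_exp_neg_quadratic ha' (Complex.I * u)
  have hL : ∀ k : ℤ, ((Real.exp (-π * ((k : ℝ) * σ / Kr) ^ 2) : ℝ) : ℂ) *
      Complex.exp (2 * π * Complex.I * (k : ℂ) * (u : ℂ)) =
      Complex.exp (-(π:ℂ) * (((σ / Kr) ^ 2 : ℝ) : ℂ) * (k : ℂ) ^ 2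
        + 2 * π * (Complex.I * u) * (k : ℂ)) := by
    intro k
    rw [Complex.ofReal_exp, ← Complex.exp_add]
    congr 1
    push_cast
    have hKr : (Kr : ℂ) ≠ 0 := by exact_mod_cast hK.ne'
    field_simp
  have hsq : ((((σ / Kr) ^ 2 : ℝ) : ℂ)) ^ (1 / 2 : ℂ) = ((σ / Kr : ℝ) : ℂ) := by
    have h12 : (1/2 : ℂ) = ((1/2 : ℝ) : ℂ) := by norm_num
    rw [h12, ← Complex.ofReal_cpow ha.le]
    congr 1
    rw [← Real.sqrt_eq_rpow, Real.sqrt_sq (by positivity)]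
  have hR : ∀ n : ℤ, Complex.exp (-(π:ℂ) / (((σ / Kr) ^ 2 : ℝ) : ℂ) *
      ((n : ℂ) + Complex.I * (Complex.I * u)) ^ 2) =
      ((Real.exp (-π * (u + ((-n : ℤ) : ℝ)) ^ 2 * Kr ^ 2 / σ ^ 2) : ℝ) : ℂ) := by
    intro n
    rw [Complex.ofReal_exp]
    congr 1
    have hσ' : (σ : ℂ) ≠ 0 := by exact_mod_cast hσ.ne'
    have hKr : (Kr : ℂ) ≠ 0 := by exact_mod_cast hK.ne'
    push_cast
    rw [← mul_assoc, Complex.I_mul_I]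
    field_simp
    ring
  calc ∑' k : ℤ, ((Real.exp (-π * ((k : ℝ) * σ / Kr) ^ 2) : ℝ) : ℂ) *
        Complex.exp (2 * π * Complex.I * (k : ℂ) * (u : ℂ))
      = ∑' k : ℤ, Complex.exp (-(π:ℂ) * (((σ / Kr) ^ 2 : ℝ) : ℂ) * (k : ℂ) ^ 2
          + 2 * π * (Complex.I * u) * (k : ℂ)) := tsum_congr hL
    _ = 1 / ((((σ / Kr) ^ 2 : ℝ) : ℂ)) ^ (1 / 2 : ℂ) *
        ∑' n : ℤ, Complex.exp (-(π:ℂ) / (((σ / Kr) ^ 2 : ℝ) : ℂ) *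
          ((n : ℂ) + Complex.I * (Complex.I * u)) ^ 2) := key
    _ = ((Kr / σ : ℝ) : ℂ) *
        ∑' n : ℤ, ((Real.exp (-π * (u + ((-n : ℤ) : ℝ)) ^ 2 * Kr ^ 2 / σ ^ 2) : ℝ) : ℂ) := by
        rw [hsq, tsum_congr hR, one_div, ← Complex.ofReal_inv, inv_div]
    _ = ((Kr / σ) * ∑' n : ℤ, Real.exp (-π * (u + ((-n : ℤ) : ℝ)) ^ 2 * Kr ^ 2 / σ ^ 2) : ℝ) := by
        rw [Complex.ofReal_mul, Complex.ofReal_tsum]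
    _ = ((Kr / σ) * ∑' j : ℤ, Real.exp (-π * (u + (j : ℝ)) ^ 2 * Kr ^ 2 / σ ^ 2) : ℝ) := by
        norm_cast
        congr 1
        exact (Equiv.neg ℤ).tsum_eq fun j => Real.exp (-π * (u + (j : ℝ)) ^ 2 * Kr ^ 2 / σ ^ 2)
    _ = ((∑' j : ℤ, (Kr / σ) * Real.exp (-π * (u + (j : ℝ)) ^ 2 * Kr ^ 2 / σ ^ 2) : ℝ) : ℂ) := by
        rw [tsum_mul_left]


set_option maxHeartbeats 1000000 in
lemma aux_tail (σ : ℝ) (K : ℕ) (hσ : 0 < σ) (hπσ : 1 < π * σ) (hK : 0 < K) :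
    ∑' k : { k : ℤ // k ∉ Finset.Icc (-(K : ℤ)) (K : ℤ) },
        Real.exp (-π * (((k : ℤ) : ℝ) * σ / (K : ℝ)) ^ 2) <
      ((K : ℝ) / σ) * Real.exp (-π * σ ^ 2) := by
  have hKr : (0:ℝ) < (K:ℝ) := by exact_mod_cast hK
  set b : ℝ := 2 * π * σ ^ 2 / (K:ℝ) with hb
  have hbpos : 0 < b := by positivity
  set q : ℝ := Real.exp (-b) with hq
  have hq0 : 0 < q := Real.exp_pos _
  have hq1 : q < 1 := Real.exp_lt_one_iff.mpr (by linarith)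
  set g : ℤ → ℝ := fun k => Real.exp (-π * (((k:ℤ) : ℝ) * σ / (K : ℝ)) ^ 2) with hgdef
  have hgpos : ∀ k, 0 < g k := fun k => Real.exp_pos _
  have hgsum : Summable g := by
    refine (aux_summable_exp_sq (a := π * σ^2 / (K:ℝ)^2) (by positivity)).congr fun k => ?_
    congr 1
    field_simp
  -- key term bound: for m ≥ K+1 (m : ℕ), g m ≤ exp(-π σ²) * q ^ (m - K) with m = n+K+1
  have hterm : ∀ n : ℕ, g ((n:ℤ) + (K:ℤ) + 1) ≤ Real.exp (-π * σ^2 - b) * q ^ n := by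
    intro n
    rw [hq, ← Real.exp_nat_mul, ← Real.exp_add]
    apply Real.exp_le_exp.mpr
    have h1 : ((n:ℝ) + (K:ℝ) + 1)^2 ≥ (K:ℝ)^2 + 2*(K:ℝ)*((n:ℝ)+1) := by nlinarith [Nat.cast_nonneg (α := ℝ) n, hKr]
    have expand : -π * ((((n:ℤ) + (K:ℤ) + 1 : ℤ) : ℝ) * σ / (K : ℝ)) ^ 2
        = -π * σ^2 * (((n:ℝ) + (K:ℝ) + 1)^2 / (K:ℝ)^2) := by push_cast; field_simp
    rw [expand]
    have hrhs : -π * σ ^ 2 - b + (n:ℝ) * -b = -π * σ^2 * (((K:ℝ)^2 + 2*(K:ℝ)*((n:ℝ)+1)) / (K:ℝ)^2) := by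
      rw [hb]; field_simp; ring
    rw [hrhs]
    apply mul_le_mul_of_nonpos_left _ (by nlinarith [Real.pi_pos, sq_nonneg σ] : -π * σ^2 ≤ 0)
    exact div_le_div_of_nonneg_right h1 (by positivity)
  set s : Finset ℤ := Finset.Icc (-(K : ℤ)) (K : ℤ) with hs
  set G : ℤ → ℝ := fun k => if k ∈ s then 0 else g k with hG
  have hGnonneg : ∀ k, 0 ≤ G k := by
    intro k; rw [hG]; dsimp only; split <;> [rfl; exact (hgpos _).le]
  have hGle : ∀ k, G k ≤ g k := by
    intro k; rw [hG]; dsimp only; split <;> [exact (hgpos _).le; rfl]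
  have hGsum : Summable G := hgsum.of_nonneg_of_le hGnonneg hGle
  have hsub : ∑' k : { k : ℤ // k ∉ s }, g (k : ℤ) ≤ ∑' k : ℤ, G k := by
    have h1 : ∑' k : { k : ℤ // k ∉ s }, g (k : ℤ)
        = ∑' k : { k : ℤ // k ∉ s }, G (k : ℤ) := by
      apply tsum_congr
      rintro ⟨k, hk⟩
      simp [hG, hk]
    rw [h1]
    have h2 : ∑' k : ({ k : ℤ | k ∉ s } : Set ℤ), G (k : ℤ)
        = ∑' k : ℤ, Set.indicator { k : ℤ | k ∉ s } G k := tsum_subtype _ _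
    rw [show (∑' k : { k : ℤ // k ∉ s }, G (k : ℤ)) = ∑' k : ({ k : ℤ | k ∉ s } : Set ℤ), G (k : ℤ) from rfl, h2]
    refine Summable.tsum_le_tsum (fun k => ?_) (hGsum.indicator _) hGsum
    by_cases hk : k ∈ { k : ℤ | k ∉ s }
    · rw [Set.indicator_of_mem hk]
    · rw [Set.indicator_of_notMem hk]; exact hGnonneg k
  have hGnat : Summable fun n : ℕ => G (n : ℤ) :=
    hGsum.comp_injective Nat.cast_injective
  have hGneg : Summable fun n : ℕ => G (-((n : ℤ) + 1)) := by
    apply hGsum.comp_injective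
    intro a b hab
    simpa using hab
  have hsplit : ∑' k : ℤ, G k = (∑' n : ℕ, G (n : ℤ)) + ∑' n : ℕ, G (-((n : ℤ) + 1)) :=
    tsum_of_nat_of_neg_add_one hGnat hGneg
  -- geometric bound
  set C : ℝ := Real.exp (-π * σ ^ 2 - b) with hC
  have hCpos : 0 < C := Real.exp_pos _
  have hgeo : Summable (fun n : ℕ => C * q ^ n) :=
    (summable_geometric_of_lt_one hq0.le hq1).mul_left C
  have hgeo_sum : ∑' n : ℕ, C * q ^ n = C * (1 - q)⁻¹ := by
    rw [tsum_mul_left, tsum_geometric_of_lt_one hq0.le hq1]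
  have hnat_bound : ∑' n : ℕ, G (n : ℤ) ≤ C * (1 - q)⁻¹ := by
    have hzero : ∀ i ∈ Finset.range (K + 1), G (i : ℤ) = 0 := by
      intro i hi
      rw [Finset.mem_range] at hi
      have : (i : ℤ) ∈ s := by
        rw [hs, Finset.mem_Icc]
        constructor <;> omega
      simp [hG, this]
    have heq := Summable.sum_add_tsum_nat_add (f := fun n : ℕ => G (n : ℤ)) (K + 1) hGnat
    rw [← heq, Finset.sum_eq_zero hzero, zero_add]
    rw [← hgeo_sum]
    refine Summable.tsum_le_tsum (fun n => ?_) (hGnat.comp_injective (add_left_injective (K+1))) hgeo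
    have hmem : ((n + (K + 1) : ℕ) : ℤ) ∉ s := by
      rw [hs, Finset.mem_Icc]; push_cast; omega
    have heq2 : G ((n + (K + 1) : ℕ) : ℤ) = g ((n : ℤ) + (K : ℤ) + 1) := by
      rw [hG]; dsimp only; rw [if_neg hmem, hgdef]; dsimp only
      congr 2
      all_goals (push_cast; ring)
    show G ((n + (K + 1) : ℕ) : ℤ) ≤ C * q ^ n
    rw [heq2]
    exact hterm n
  have hneg_bound : ∑' n : ℕ, G (-((n : ℤ) + 1)) ≤ C * (1 - q)⁻¹ := by
    have hzero : ∀ i ∈ Finset.range K, G (-((i : ℤ) + 1)) = 0 := by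
      intro i hi
      rw [Finset.mem_range] at hi
      have : -((i : ℤ) + 1) ∈ s := by
        rw [hs, Finset.mem_Icc]
        constructor <;> omega
      rw [hG]; dsimp only; rw [if_pos this]
    have heq := Summable.sum_add_tsum_nat_add (f := fun n : ℕ => G (-((n : ℤ) + 1))) K hGneg
    rw [← heq, Finset.sum_eq_zero hzero, zero_add]
    rw [← hgeo_sum]
    refine Summable.tsum_le_tsum (fun n => ?_) (hGneg.comp_injective (add_left_injective K)) hgeo
    have hmem : -(((n + K : ℕ) : ℤ) + 1) ∉ s := by
      rw [hs, Finset.mem_Icc]; push_cast; omega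
    have heq2 : G (-(((n + K : ℕ) : ℤ) + 1)) = g ((n : ℤ) + (K : ℤ) + 1) := by
      rw [hG]; dsimp only; rw [if_neg hmem, hgdef]; dsimp only
      congr 2
      all_goals (push_cast; ring)
    show G (-(((n + K : ℕ) : ℤ) + 1)) ≤ C * q ^ n
    rw [heq2]
    exact hterm n
  -- final arithmetic
  have htotal : ∑' k : { k : ℤ // k ∉ s }, g (k : ℤ) ≤ 2 * (C * (1 - q)⁻¹) := by
    calc ∑' k : { k : ℤ // k ∉ s }, g (k : ℤ) ≤ ∑' k : ℤ, G k := hsub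
      _ = (∑' n : ℕ, G (n : ℤ)) + ∑' n : ℕ, G (-((n : ℤ) + 1)) := hsplit
      _ ≤ C * (1 - q)⁻¹ + C * (1 - q)⁻¹ := add_le_add hnat_bound hneg_bound
      _ = 2 * (C * (1 - q)⁻¹) := by ring
  refine lt_of_le_of_lt htotal ?_
  have h1mq : 0 < 1 - q := by linarith
  have hbq : b * q < 1 - q := by
    have h := Real.add_one_lt_exp hbpos.ne'
    have : q * (b + 1) < 1 := by
      have := mul_lt_mul_of_pos_left h hq0
      rwa [hq, ← Real.exp_add, neg_add_cancel, Real.exp_zero, mul_comm (rexp (-b)) (b+1), mul_comm] at this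
    nlinarith
  have hCq : C = Real.exp (-π * σ ^ 2) * q := by
    rw [hC, hq, ← Real.exp_add]; ring_nf
  rw [hCq]
  have hE : (0:ℝ) < Real.exp (-π * σ ^ 2) := Real.exp_pos _
  rw [show 2 * (Real.exp (-π * σ ^ 2) * q * (1 - q)⁻¹) = Real.exp (-π * σ ^ 2) * (2 * q * (1-q)⁻¹) by ring,
    show (K : ℝ) / σ * Real.exp (-π * σ ^ 2) = Real.exp (-π * σ ^ 2) * ((K:ℝ)/σ) by ring]
  apply mul_lt_mul_of_pos_left _ hE
  rw [mul_inv_lt_iff₀' h1mq]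
  rw [mul_div_assoc', lt_div_iff₀ hσ]
  -- need : 2*q*σ < (1-q)*K
  have hb2 : b * (K:ℝ) = 2 * π * σ^2 := by rw [hb]; field_simp
  nlinarith [mul_lt_mul_of_pos_left hbq hKr, hq0, hσ, hπσ]

theorem periodic_approximation_bound
    (S : ℕ) (w : Fin S → ℝ) (xs : Fin S → ℝ) (r : Measure ℝ)
    (β ω ε : ℝ) (K : ℕ) (hK : 0 < K) (hω : 0 ≤ ω) (hβω : ω < β) (hβ1 : β ≤ 1) (hε : 0 ≤ ε)
    (hw : ∀ s, β ≤ w s)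
    (f : Measure ℝ)
    (hf : f = (∑ s : Fin S, ENNReal.ofReal (w s) • Measure.dirac (xs s)) + r)
    (hprob : IsProbabilityMeasure f)
    (hr : r Set.univ ≤ ENNReal.ofReal ω)
    (σ : ℝ) (hσ : σ = Real.sqrt ((1 / π) * Real.log (12 / (β - ω))))
    (hK3 : 3 * σ ≤ (K : ℝ))
    (y : ℤ → ℂ)
    (hy : ∀ k : ℤ, |k| ≤ (K : ℤ) →
      ‖y k - ∫ t, Complex.exp (-(2 * π * Complex.I * t * k)) ∂f‖ ≤ ε)
    (φp : ℝ → ℝ)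
    (hφp : ∀ x : ℝ, φp x = ∑' j : ℤ, ((K : ℝ) / σ) * Real.exp (-π * (x + j) ^ 2 * K ^ 2 / σ ^ 2)) :
    ∀ x : ℝ,
      ‖
        ((∑ k ∈ Finset.Icc (-(K : ℤ)) (K : ℤ), y k * Real.exp (-π * (k * σ / K) ^ 2) *
            Complex.exp (2 * π * Complex.I * k * x)) -
          ((∫ t, φp (x - t) ∂f : ℝ) : ℂ))‖ <
      (ε + Real.exp (-π * σ ^ 2)) * φp 0 := by
  haveI := hprob
  intro x
  have hKr : (0:ℝ) < (K:ℝ) := by exact_mod_cast hK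
  have hβω0 : 0 < β - ω := sub_pos.mpr hβω
  have hlog1 : 1 ≤ Real.log (12 / (β - ω)) := by
    rw [Real.le_log_iff_exp_le (by positivity)]
    have h1 : (12:ℝ) ≤ 12 / (β - ω) := by
      rw [le_div_iff₀ hβω0]; nlinarith
    have h2 : Real.exp 1 ≤ 12 := by
      have := Real.exp_one_lt_d9
      linarith
    linarith
  have hσ2 : σ ^ 2 = (1 / π) * Real.log (12 / (β - ω)) := by
    rw [hσ, Real.sq_sqrt]
    positivity
  have hσpos : 0 < σ := by
    rw [hσ]
    apply Real.sqrt_pos.mpr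
    positivity
  have hσ2ge : 1 / π ≤ σ ^ 2 := by
    rw [hσ2]
    nlinarith [Real.pi_pos]
  have hπσ : 1 < π * σ := by
    have hπσ2 : 1 ≤ π * σ ^ 2 := (div_le_iff₀' Real.pi_pos).mp hσ2ge
    nlinarith [Real.pi_gt_three, hσpos]
  set s : Finset ℤ := Finset.Icc (-(K : ℤ)) (K : ℤ) with hsdef
  set φh : ℤ → ℝ := fun k => Real.exp (-π * ((k:ℝ) * σ / (K:ℝ)) ^ 2) with hφhdef
  set F : ℤ → ℂ := fun k => ∫ t, Complex.exp (-(2 * π * Complex.I * t * k)) ∂f with hFdef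
  set E : ℤ → ℂ := fun k => Complex.exp (2 * π * Complex.I * (k:ℂ) * (x:ℂ)) with hEdef
  have hφh_pos : ∀ k, 0 < φh k := fun k => Real.exp_pos _
  have hφh_sum : Summable φh := by
    refine (aux_summable_exp_sq (a := π * σ^2 / (K:ℝ)^2) (by positivity)).congr fun k => ?_
    rw [hφhdef]
    dsimp only
    congr 1
    field_simp
  have hEnorm : ∀ (k : ℤ) (u : ℝ), ‖Complex.exp (2 * π * Complex.I * (k:ℂ) * (u:ℂ))‖ = 1 := by
    intro k u
    rw [Complex.norm_exp]
    have : (2 * π * Complex.I * (k:ℂ) * (u:ℂ)).re = 0 := by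
      simp [Complex.mul_re, Complex.mul_im]
    rw [this, Real.exp_zero]
  have hFnorm : ∀ (k : ℤ) (t : ℝ), ‖Complex.exp (-(2 * π * Complex.I * (t:ℂ) * (k:ℂ)))‖ = 1 := by
    intro k t
    rw [Complex.norm_exp]
    have : (-(2 * π * Complex.I * (t:ℂ) * (k:ℂ))).re = 0 := by
      simp [Complex.mul_re, Complex.mul_im]
    rw [this, Real.exp_zero]
  have hFle : ∀ k, ‖F k‖ ≤ 1 := by
    intro k
    rw [hFdef]
    have := norm_integral_le_of_norm_le_const (μ := f) (C := 1)
      (f := fun t : ℝ => Complex.exp (-(2 * π * Complex.I * (t:ℂ) * (k:ℂ))))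
      (Filter.Eventually.of_forall fun t => le_of_eq (hFnorm k t))
    simpa using this
  -- φp 0 equals full sum of φh
  have hφp0 : φp 0 = ∑' k : ℤ, φh k := by
    have h0 := aux_poisson σ (K:ℝ) hσpos hKr 0
    have h1 : ∑' k : ℤ, ((φh k : ℝ) : ℂ) = ((φp 0 : ℝ) : ℂ) := by
      rw [hφp 0]
      rw [← h0]
      apply tsum_congr
      intro k
      rw [hφhdef]
      norm_num
    rw [← Complex.ofReal_tsum] at h1
    exact (Complex.ofReal_injective h1).symm
  have hφp0_ge : (K:ℝ) / σ ≤ φp 0 := by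
    rw [hφp 0]
    have hsum0 : Summable (fun j : ℤ => ((K:ℝ)/σ) * Real.exp (-π * ((0:ℝ) + (j:ℝ)) ^ 2 * (K:ℝ) ^ 2 / σ ^ 2)) := by
      refine ((aux_summable_exp_sq (a := π * (K:ℝ)^2 / σ^2) (by positivity)).mul_left ((K:ℝ)/σ)).congr fun j => ?_
      congr 1
      congr 1
      field_simp
      ring
    have h0 : ((K:ℝ)/σ) = ((K:ℝ)/σ) * Real.exp (-π * ((0:ℝ) + ((0:ℤ):ℝ)) ^ 2 * (K:ℝ) ^ 2 / σ ^ 2) := by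
      norm_num
    calc (K:ℝ)/σ = ((K:ℝ)/σ) * Real.exp (-π * ((0:ℝ) + ((0:ℤ):ℝ)) ^ 2 * (K:ℝ) ^ 2 / σ ^ 2) := h0
      _ ≤ ∑' j : ℤ, ((K:ℝ)/σ) * Real.exp (-π * ((0:ℝ) + (j:ℝ)) ^ 2 * (K:ℝ) ^ 2 / σ ^ 2) := by
          refine Summable.le_tsum hsum0 0 fun j _ => by positivity
      _ = ∑' j : ℤ, ((K:ℝ)/σ) * Real.exp (-π * ((0:ℝ) + (j:ℝ)) ^ 2 * (K:ℝ) ^ 2 / σ ^ 2) := rfl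
  -- the convolution integral identity
  have hint : ((∫ t, φp (x - t) ∂f : ℝ) : ℂ) = ∑' k : ℤ, (φh k : ℂ) * E k * F k := by
    rw [show ((∫ t, φp (x - t) ∂f : ℝ) : ℂ) = ∫ t, ((φp (x - t) : ℝ) : ℂ) ∂f from
      (integral_ofReal (f := fun t => φp (x - t))).symm]
    have hptw : ∀ t : ℝ, ((φp (x - t) : ℝ) : ℂ)
        = ∑' k : ℤ, (φh k : ℂ) * Complex.exp (2 * π * Complex.I * (k:ℂ) * (((x - t) : ℝ) : ℂ)) := by
      intro t
      rw [hφp (x - t)]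
      exact (aux_poisson σ (K:ℝ) hσpos hKr (x - t)).symm
    calc ∫ t, ((φp (x - t) : ℝ) : ℂ) ∂f
        = ∫ t, (∑' k : ℤ, (φh k : ℂ) *
            Complex.exp (2 * π * Complex.I * (k:ℂ) * (((x - t) : ℝ) : ℂ))) ∂f := by
          congr 1
          funext t
          exact hptw t
      _ = ∑' k : ℤ, ∫ t, (φh k : ℂ) *
            Complex.exp (2 * π * Complex.I * (k:ℂ) * (((x - t) : ℝ) : ℂ)) ∂f := by
          apply integral_tsum
          · intro k
            apply Continuous.aestronglyMeasurable
            apply continuous_const.mul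
            apply Complex.continuous_exp.comp
            apply continuous_const.mul
            exact Complex.continuous_ofReal.comp (continuous_const.sub continuous_id)
          · have hnorm : ∀ (k : ℤ) (t : ℝ), (‖(φh k : ℂ) *
                Complex.exp (2 * π * Complex.I * (k:ℂ) * (((x - t) : ℝ) : ℂ))‖₊ : ℝ≥0∞)
                = ENNReal.ofReal (φh k) := by
              intro k t
              have h1 : ‖(φh k : ℂ) * Complex.exp (2 * π * Complex.I * (k:ℂ) * (((x - t) : ℝ) : ℂ))‖
                  = φh k := by
                rw [norm_mul, hEnorm k (x - t), mul_one, Complex.norm_real,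
                  Real.norm_eq_abs, abs_of_pos (hφh_pos k)]
              rw [← enorm_eq_nnnorm, ← ofReal_norm, h1]
            have hlint : ∀ k : ℤ, ∫⁻ t, (‖(φh k : ℂ) *
                Complex.exp (2 * π * Complex.I * (k:ℂ) * (((x - t) : ℝ) : ℂ))‖₊ : ℝ≥0∞) ∂f
                = ENNReal.ofReal (φh k) := by
              intro k
              rw [lintegral_congr (hnorm k), lintegral_const, measure_univ, mul_one]
            simp only [enorm_eq_nnnorm]
            rw [tsum_congr hlint, ← ENNReal.ofReal_tsum_of_nonneg (fun k => (hφh_pos k).le) hφh_sum]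
            exact ENNReal.ofReal_ne_top
      _ = ∑' k : ℤ, (φh k : ℂ) * E k * F k := by
          apply tsum_congr
          intro k
          have hsplit : ∀ t : ℝ, (φh k : ℂ) *
              Complex.exp (2 * π * Complex.I * (k:ℂ) * (((x - t) : ℝ) : ℂ))
              = ((φh k : ℂ) * E k) * Complex.exp (-(2 * π * Complex.I * (t:ℂ) * (k:ℂ))) := by
            intro t
            rw [hEdef]
            dsimp only
            rw [mul_assoc ((φh k : ℂ)) _ _, ← Complex.exp_add]
            congr 1
            push_cast
            ring
          calc ∫ t, (φh k : ℂ) *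
              Complex.exp (2 * π * Complex.I * (k:ℂ) * (((x - t) : ℝ) : ℂ)) ∂f
              = ∫ t, ((φh k : ℂ) * E k) *
                Complex.exp (-(2 * π * Complex.I * (t:ℂ) * (k:ℂ))) ∂f := by
                congr 1; funext t; exact hsplit t
            _ = ((φh k : ℂ) * E k) * F k := by
                rw [MeasureTheory.integral_const_mul, hFdef]
  -- summability of the series c k
  set c : ℤ → ℂ := fun k => (φh k : ℂ) * E k * F k with hcdef
  have hcnorm : ∀ k, ‖c k‖ ≤ φh k := by
    intro k
    rw [hcdef]
    dsimp only
    rw [norm_mul, norm_mul, Complex.norm_real, Real.norm_eq_abs, abs_of_pos (hφh_pos k),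
      hEnorm k x, mul_one]
    calc φh k * ‖F k‖ ≤ φh k * 1 := by
          exact mul_le_mul_of_nonneg_left (hFle k) (hφh_pos k).le
      _ = φh k := mul_one _
  have hSc : Summable c := Summable.of_norm_bounded hφh_sum hcnorm
  have hsplitsum := hSc.sum_add_tsum_subtype_compl s
  set T : ℂ := ∑' k : { k : ℤ // k ∉ s }, c k with hTdef
  set A : ℂ := ∑ k ∈ s, (y k - F k) * (φh k : ℂ) * E k with hAdef
  have hdiff : (∑ k ∈ s, y k * ((Real.exp (-π * ((k:ℝ) * σ / (K:ℝ)) ^ 2) : ℝ) : ℂ) *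
      Complex.exp (2 * π * Complex.I * (k:ℂ) * (x:ℂ))) - ((∫ t, φp (x - t) ∂f : ℝ) : ℂ)
      = A - T := by
    rw [hint, ← hsplitsum, hAdef]
    have h1 : ∑ k ∈ s, (y k - F k) * (φh k : ℂ) * E k
        = (∑ k ∈ s, y k * ((Real.exp (-π * ((k:ℝ) * σ / (K:ℝ)) ^ 2) : ℝ) : ℂ) *
            Complex.exp (2 * π * Complex.I * (k:ℂ) * (x:ℂ))) - ∑ k ∈ s, c k := by
      rw [← Finset.sum_sub_distrib]
      apply Finset.sum_congr rfl
      intro k _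
      rw [hcdef, hφhdef, hEdef]
      dsimp only
      ring
    rw [h1]
    ring
  rw [hdiff]
  -- bound the main part
  have hA : ‖A‖ ≤ ε * φp 0 := by
    rw [hAdef]
    calc ‖∑ k ∈ s, (y k - F k) * (φh k : ℂ) * E k‖
        ≤ ∑ k ∈ s, ‖(y k - F k) * (φh k : ℂ) * E k‖ := norm_sum_le _ _
      _ ≤ ∑ k ∈ s, ε * φh k := by
          apply Finset.sum_le_sum
          intro k hk
          rw [norm_mul, norm_mul, hEnorm k x, mul_one, Complex.norm_real,
            Real.norm_eq_abs, abs_of_pos (hφh_pos k)]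
          apply mul_le_mul_of_nonneg_right _ (hφh_pos k).le
          have hkK : |k| ≤ (K : ℤ) := by
            rw [hsdef, Finset.mem_Icc] at hk
            rw [abs_le]
            exact hk
          have := hy k hkK
          exact this
      _ = ε * ∑ k ∈ s, φh k := by rw [Finset.mul_sum]
      _ ≤ ε * φp 0 := by
          apply mul_le_mul_of_nonneg_left _ hε
          rw [hφp0]
          exact hφh_sum.sum_le_tsum s (fun k _ => (hφh_pos k).le)
  -- bound the tail
  have hTsub : Summable (fun k : { k : ℤ // k ∉ s } => φh (k : ℤ)) := hφh_sum.subtype _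
  have hT : ‖T‖ ≤ ∑' k : { k : ℤ // k ∉ s }, φh (k : ℤ) := by
    rw [hTdef]
    calc ‖∑' k : { k : ℤ // k ∉ s }, c (k : ℤ)‖
        ≤ ∑' k : { k : ℤ // k ∉ s }, ‖c (k : ℤ)‖ := by
          apply norm_tsum_le_tsum_norm
          exact Summable.of_nonneg_of_le (fun k => norm_nonneg _) (fun k => hcnorm _) hTsub
      _ ≤ ∑' k : { k : ℤ // k ∉ s }, φh (k : ℤ) := by
          apply Summable.tsum_le_tsum (fun k => hcnorm _)
            (Summable.of_nonneg_of_le (fun k => norm_nonneg _) (fun k => hcnorm _) hTsub) hTsub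
  have hTail : ∑' k : { k : ℤ // k ∉ s }, φh (k : ℤ) < ((K:ℝ)/σ) * Real.exp (-π * σ ^ 2) :=
    aux_tail σ K hσpos hπσ hK
  have hTail2 : ∑' k : { k : ℤ // k ∉ s }, φh (k : ℤ) < Real.exp (-π * σ ^ 2) * φp 0 := by
    refine lt_of_lt_of_le hTail ?_
    rw [mul_comm]
    exact mul_le_mul_of_nonneg_left hφp0_ge (Real.exp_pos _).le
  -- conclude
  calc ‖A - T‖ ≤ ‖A‖ + ‖T‖ := norm_sub_le _ _
    _ ≤ ε * φp 0 + ∑' k : { k : ℤ // k ∉ s }, φh (k : ℤ) := add_le_add hA hT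
    _ < ε * φp 0 + Real.exp (-π * σ ^ 2) * φp 0 := by linarith
    _ = (ε + Real.exp (-π * σ ^ 2)) * φp 0 := by ring
end

section
/- Under the periodic setting (f_* = Σ_s w_s δ_{x_s} + r on 𝕋, w_s ≥ β, r(𝕋) ≤ ω < β, |y(k) − f̂_*(k)| ≤ ε ≤ (β−ω)/3 for integers |k| ≤ K, σ = √((1/π)log(12/(β−ω))), K ≥ 3τ with τ = (1/π)log(12/(β−ω))), every spike location x_s lies in X_e = {x ∈ 𝕋 : |Σ_{|k|≤K} y(k)e^{−π(kσ/K)²}e^{2πikx}| > ((6β+5ω)/11)·φ_p(0)}. -/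
open Real MeasureTheory Set

lemma summable_gauss_int (a : ℝ) (ha : 0 < a) :
    Summable (fun n : ℤ => Real.exp (-π * a * n ^ 2)) := by
  simpa [mul_assoc] using summable_pow_mul_jacobiTheta₂_term_bound 0 ha 0

lemma poisson_aux {σ : ℝ} (hσ : 0 < σ) {K : ℕ} (hK : 0 < K) (u : ℝ) :
    (∑' k : ℤ, (Real.exp (-π * (k * σ / K) ^ 2) : ℂ) * Complex.exp (2 * π * Complex.I * k * u))
      = ((∑' j : ℤ, ((K : ℝ) / σ) * Real.exp (-π * (u + j) ^ 2 * K ^ 2 / σ ^ 2) : ℝ) : ℂ) := by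
  have hK' : (0:ℝ) < K := Nat.cast_pos.mpr hK
  have hKne : (K:ℝ) ≠ 0 := hK'.ne'
  have hσne : σ ≠ 0 := hσ.ne'
  have ha : (0:ℝ) < (σ / K) ^ 2 := by positivity
  have key := Complex.tsum_exp_neg_quadratic (a := (((σ / K) ^ 2 : ℝ) : ℂ))
      (by rw [Complex.ofReal_re]; exact ha) (-Complex.I * u)
  have h1 : ∀ k : ℤ, (Real.exp (-π * (k * σ / K) ^ 2) : ℂ) *
      Complex.exp (2 * π * Complex.I * k * u)
      = Complex.exp (-π * (((σ / K) ^ 2 : ℝ) : ℂ) * ((-k : ℤ) : ℂ) ^ 2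
          + 2 * π * (-Complex.I * u) * ((-k : ℤ) : ℂ)) := by
    intro k
    rw [Complex.ofReal_exp, ← Complex.exp_add]
    congr 1
    push_cast
    field_simp
  have hIu : ∀ n : ℤ, (n:ℂ) + Complex.I * (-Complex.I * (u:ℂ)) = ((u + n : ℝ) : ℂ) := by
    intro n
    have : Complex.I * (-Complex.I * (u:ℂ)) = (u:ℂ) := by
      rw [neg_mul, mul_neg, ← mul_assoc, Complex.I_mul_I]; ring
    rw [this]; push_cast; ring
  have hterm : ∀ n : ℤ,
      Complex.exp (-(π:ℂ) / (((σ / K) ^ 2 : ℝ) : ℂ) * ((n:ℂ) + Complex.I * (-Complex.I * u)) ^ 2)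
        = ((Real.exp (-π * (u + n) ^ 2 * K ^ 2 / σ ^ 2) : ℝ) : ℂ) := by
    intro n
    rw [hIu n, Complex.ofReal_exp]
    congr 1
    push_cast
    field_simp
  have hsq : (((σ / K) ^ 2 : ℝ) : ℂ) ^ ((1:ℂ) / 2) = ((σ / K : ℝ) : ℂ) := by
    rw [show ((1:ℂ)/2) = ((1/2 : ℝ) : ℂ) by norm_num,
      ← Complex.ofReal_cpow (by positivity), ← Real.sqrt_eq_rpow,
      Real.sqrt_sq (by positivity)]
  calc (∑' k : ℤ, (Real.exp (-π * (k * σ / K) ^ 2) : ℂ) * Complex.exp (2 * π * Complex.I * k * u))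
      = ∑' k : ℤ, Complex.exp (-π * (((σ / K) ^ 2 : ℝ) : ℂ) * (k : ℂ) ^ 2
          + 2 * π * (-Complex.I * u) * (k : ℂ)) := by
        rw [← (Equiv.neg ℤ).tsum_eq]
        simp only [Equiv.neg_apply]
        exact tsum_congr fun k => by simpa using h1 (-k)
    _ = 1 / (((σ / K) ^ 2 : ℝ) : ℂ) ^ ((1:ℂ) / 2) *
          ∑' n : ℤ, Complex.exp (-(π:ℂ) / (((σ / K) ^ 2 : ℝ) : ℂ)
            * ((n:ℂ) + Complex.I * (-Complex.I * u)) ^ 2) := key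
    _ = ((∑' j : ℤ, ((K : ℝ) / σ) * Real.exp (-π * (u + j) ^ 2 * K ^ 2 / σ ^ 2) : ℝ) : ℂ) := by
        rw [hsq, tsum_congr hterm, Complex.ofReal_tsum]
        simp_rw [Complex.ofReal_mul]
        rw [tsum_mul_left, one_div, ← Complex.ofReal_inv, inv_div]

lemma gauss_tail_le (σ : ℝ) (hσpos : 0 < σ) (K : ℕ) (hK : 0 < K)
    (c : ℤ → ℝ) (hcdef : c = fun k : ℤ => Real.exp (-π * ((k:ℝ) * σ / (K:ℝ)) ^ 2))
    (hcpos : ∀ k, 0 < c k) (hcsum : Summable c) (hKne : (K:ℝ) ≠ 0) :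
    (∑' k : ((↑(Finset.Icc (-(K:ℤ)) (K:ℤ)) : Set ℤ)ᶜ : Set ℤ), c (k:ℤ))
      ≤ ∑' m : ℤ, Real.exp (-π * σ ^ 2) * c m := by
  have hπ : (0:ℝ) < π := Real.pi_pos
  have hmem : ∀ k : ((↑(Finset.Icc (-(K:ℤ)) (K:ℤ)) : Set ℤ)ᶜ : Set ℤ),
      ((k:ℤ) < -(K:ℤ) ∨ (K:ℤ) < (k:ℤ)) := by
    intro k
    have := k.2
    simp only [mem_compl_iff, Finset.coe_Icc, mem_Icc, not_and_or, not_le] at this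
    omega
  set i : ((↑(Finset.Icc (-(K:ℤ)) (K:ℤ)) : Set ℤ)ᶜ : Set ℤ) → ℤ :=
    fun k => if 0 < (k:ℤ) then (k:ℤ) - K else (k:ℤ) + K with hidef
  have hinj : Function.Injective i := by
    intro a b h
    have ha := hmem a; have hb := hmem b
    rw [hidef] at h
    simp only at h
    apply Subtype.ext
    split_ifs at h <;> omega
  have hle : ∀ k : ((↑(Finset.Icc (-(K:ℤ)) (K:ℤ)) : Set ℤ)ᶜ : Set ℤ),
      c (k:ℤ) ≤ Real.exp (-π * σ ^ 2) * c (i k) := by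
    intro k
    have hb := hmem k
    have hkm : ((K:ℤ))^2 + (i k)^2 ≤ ((k:ℤ))^2 := by
      rw [hidef]
      simp only
      split_ifs with h
      · have hko : (K:ℤ) < (k:ℤ) := hb.resolve_left (by omega)
        nlinarith
      · have hko : ((k:ℤ)) < -(K:ℤ) := hb.resolve_right (by omega)
        nlinarith
    have hkmR : ((K:ℝ))^2 + ((i k : ℤ):ℝ)^2 ≤ (((k:ℤ)):ℝ)^2 := by exact_mod_cast hkm
    rw [hcdef]
    simp only
    rw [← Real.exp_add, Real.exp_le_exp]
    have e1 : ∀ a : ℝ, (a * σ / K)^2 = a^2 * (σ^2 / K^2) := fun a => by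
      field_simp
    have e2 : σ^2 = (K:ℝ)^2 * (σ^2 / K^2) := by field_simp
    rw [e1, e1]
    have hA : (0:ℝ) ≤ σ^2 / K^2 := by positivity
    nlinarith [mul_le_mul_of_nonneg_right hkmR (mul_nonneg hπ.le hA)]
  exact Summable.tsum_le_tsum_of_inj i hinj
    (fun m _ => mul_nonneg (Real.exp_nonneg _) (hcpos m).le) hle
    (hcsum.subtype _) (hcsum.mul_left _)

theorem periodic_spikes_in_estimated_set
    (S : ℕ) (w : Fin S → ℝ) (xs : Fin S → ℝ) (r : Measure ℝ)
    (β ω ε : ℝ) (K : ℕ) (hK : 0 < K) (hω : 0 ≤ ω) (hβω : ω < β) (hβ1 : β ≤ 1)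
    (hε : 0 ≤ ε) (hε3 : ε ≤ (β - ω) / 3)
    (hw : ∀ s, β ≤ w s)
    (f : Measure ℝ)
    (hf : f = (∑ s : Fin S, ENNReal.ofReal (w s) • Measure.dirac (xs s)) + r)
    (hprob : IsProbabilityMeasure f)
    (hr : r Set.univ ≤ ENNReal.ofReal ω)
    (σ τ : ℝ) (hσ : σ = Real.sqrt ((1 / π) * Real.log (12 / (β - ω))))
    (hτ : τ = (1 / π) * Real.log (12 / (β - ω)))
    (hK3 : 3 * τ ≤ (K : ℝ))
    (y : ℤ → ℂ)
    (hy : ∀ k : ℤ, |k| ≤ (K : ℤ) →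
      ‖y k - ∫ t, Complex.exp (-(2 * π * Complex.I * t * k)) ∂f‖ ≤ ε)
    (φp : ℝ → ℝ)
    (hφp : ∀ x : ℝ, φp x = ∑' j : ℤ, ((K : ℝ) / σ) * Real.exp (-π * (x + j) ^ 2 * K ^ 2 / σ ^ 2)) :
    ∀ s : Fin S,
      ((6 * β + 5 * ω) / 11) * φp 0 <
        ‖∑ k ∈ Finset.Icc (-(K : ℤ)) (K : ℤ), y k * Real.exp (-π * (k * σ / K) ^ 2) *
          Complex.exp (2 * π * Complex.I * k * (xs s))‖ := by
  intro s0
  -- basic facts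
  have hπ : (0:ℝ) < π := Real.pi_pos
  have hb0 : (0:ℝ) < β - ω := sub_pos.mpr hβω
  have hL : 0 < Real.log (12 / (β - ω)) := by
    apply Real.log_pos
    rw [lt_div_iff₀ hb0]; linarith
  have hτpos : 0 < τ := by rw [hτ]; positivity
  have hστ : σ = Real.sqrt τ := by rw [hσ, hτ]
  have hσpos : 0 < σ := by rw [hστ]; exact Real.sqrt_pos.mpr hτpos
  have hσ2 : σ ^ 2 = τ := by rw [hστ, sq_sqrt hτpos.le]
  have hK' : (0:ℝ) < K := Nat.cast_pos.mpr hK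
  have hKne : (K:ℝ) ≠ 0 := hK'.ne'
  have hexp : Real.exp (-π * σ ^ 2) = (β - ω) / 12 := by
    rw [hσ2, hτ, show -π * ((1/π) * Real.log (12 / (β - ω))) = -Real.log (12 / (β - ω)) by
      field_simp, Real.exp_neg, Real.exp_log (by positivity), inv_div]
  have hβpos : 0 < β := lt_of_le_of_lt hω hβω
  -- the Gaussian weights
  set c : ℤ → ℝ := fun k => Real.exp (-π * ((k:ℝ) * σ / (K:ℝ)) ^ 2) with hcdef
  have hcpos : ∀ k, 0 < c k := fun k => Real.exp_pos _
  have hceq : ∀ k : ℤ, Real.exp (-π * ((σ/K)^2) * (k:ℝ) ^ 2) = c k := by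
    intro k; rw [hcdef]; congr 1; field_simp
  have hcsum : Summable c :=
    (summable_gauss_int ((σ/K)^2) (by positivity)).congr hceq
  -- Poisson summation
  have hpois : ∀ u : ℝ,
      (∑' k : ℤ, (c k : ℂ) * Complex.exp (2 * π * Complex.I * k * u)) = ((φp u : ℝ) : ℂ) := by
    intro u
    rw [hφp u]
    exact poisson_aux hσpos hK u
  have hφ0 : φp 0 = ∑' k, c k := by
    have h0 := hpois 0
    simp only [Complex.ofReal_zero, mul_zero, Complex.exp_zero, mul_one] at h0
    rw [← Complex.ofReal_tsum] at h0
    exact_mod_cast h0.symm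
  have hφ0pos : 0 < φp 0 := by
    rw [hφ0]
    have h1 : c 0 ≤ ∑' k, c k := Summable.le_tsum hcsum 0 (fun j _ => (hcpos j).le)
    have h2 : c 0 = 1 := by simp [hcdef]
    linarith
  have hφnonneg : ∀ u, 0 ≤ φp u := by
    intro u; rw [hφp u]
    exact tsum_nonneg fun j => by positivity
  -- notation
  set x : ℝ := xs s0 with hxdef
  haveI : IsFiniteMeasure r :=
    ⟨lt_of_le_of_lt hr ENNReal.ofReal_lt_top⟩
  -- integrability of characters
  have hcont : ∀ k : ℤ, Continuous fun t : ℝ => Complex.exp (-(2 * π * Complex.I * t * k)) := by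
    intro k
    exact Continuous.cexp (((continuous_const.mul Complex.continuous_ofReal).mul
      continuous_const).neg)
  have habs1 : ∀ (k : ℤ) (t : ℝ), ‖Complex.exp (-(2 * π * Complex.I * t * k))‖ = 1 := by
    intro k t
    rw [Complex.norm_exp]
    simp [Complex.mul_re, Complex.mul_im]
  have hint : ∀ (k : ℤ) (μ : Measure ℝ), IsFiniteMeasure μ →
      Integrable (fun t : ℝ => Complex.exp (-(2 * π * Complex.I * t * k))) μ := by
    intro k μ hμ
    haveI := hμ
    refine (integrable_const (1:ℝ)).mono' (hcont k).aestronglyMeasurable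
      (ae_of_all _ fun t => ?_)
    rw [habs1]
  -- Fourier coefficients of f
  set fh : ℤ → ℂ := fun k => ∫ t, Complex.exp (-(2 * π * Complex.I * t * k)) ∂f with hfhdef
  have hfh_eq : ∀ k : ℤ, fh k
      = (∑ s : Fin S, (w s : ℂ) * Complex.exp (-(2 * π * Complex.I * (xs s) * k)))
        + ∫ t, Complex.exp (-(2 * π * Complex.I * t * k)) ∂r := by
    intro k
    have hfin : ∀ s : Fin S, IsFiniteMeasure (ENNReal.ofReal (w s) • Measure.dirac (xs s)) := by
      intro s
      constructor
      rw [Measure.smul_apply, smul_eq_mul, Measure.dirac_apply' _ MeasurableSet.univ]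
      simp [ENNReal.ofReal_lt_top]
    haveI hfinsum : IsFiniteMeasure (∑ s : Fin S, ENNReal.ofReal (w s) • Measure.dirac (xs s)) := by
      constructor
      rw [Measure.finset_sum_apply]
      refine ENNReal.sum_lt_top.mpr fun s _ => ?_
      haveI := hfin s
      exact measure_lt_top _ _
    rw [hfhdef]
    simp only
    rw [hf, integral_add_measure (hint k _ hfinsum) (hint k r ‹_›),
      integral_finset_sum_measure (fun s _ => hint k _ (hfin s))]
    congr 1
    refine Finset.sum_congr rfl fun s _ => ?_
    rw [integral_smul_measure, integral_dirac, ENNReal.toReal_ofReal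
      (le_trans hβpos.le (hw s)), Complex.real_smul]
  have hfh1 : ∀ k : ℤ, ‖fh k‖ ≤ 1 := by
    intro k
    have := norm_integral_le_of_norm_le_const (μ := f) (C := 1)
      (f := fun t : ℝ => Complex.exp (-(2 * π * Complex.I * t * k)))
      (ae_of_all _ fun t => le_of_eq (habs1 k t))
    simpa using this
  -- the summand functions
  set g : ℤ → ℝ → ℂ := fun k t => (c k : ℂ) * Complex.exp (-(2 * π * Complex.I * t * k))
      * Complex.exp (2 * π * Complex.I * k * x) with hgdef
  have hgnorm : ∀ k t, ‖g k t‖ = c k := by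
    intro k t
    rw [hgdef]
    simp only [norm_mul, habs1]
    rw [Complex.norm_of_nonneg (hcpos k).le, Complex.norm_exp]
    simp [Complex.mul_re, Complex.mul_im]
  have hg_pt : ∀ t : ℝ, (∑' k : ℤ, g k t) = ((φp (x - t) : ℝ) : ℂ) := by
    intro t
    rw [← hpois (x - t)]
    refine tsum_congr fun k => ?_
    rw [hgdef]
    simp only
    rw [mul_assoc, ← Complex.exp_add]
    congr 2
    push_cast
    ring
  -- the r-part
  have hr_int : (∑' k : ℤ, ∫ t, g k t ∂r) = ((∫ t, φp (x - t) ∂r : ℝ) : ℂ) := by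
    have hmeas : ∀ k : ℤ, AEStronglyMeasurable (g k) r := by
      intro k
      apply Continuous.aestronglyMeasurable
      rw [hgdef]
      exact ((continuous_const.mul (hcont k)).mul continuous_const)
    have hlin : (∑' k : ℤ, ∫⁻ t, ‖g k t‖ₑ ∂r) ≠ ⊤ := by
      have heq : ∀ k : ℤ, (∫⁻ t, ‖g k t‖ₑ ∂r) = ENNReal.ofReal (c k) * r univ := by
        intro k
        rw [lintegral_congr (g := fun _ => ENNReal.ofReal (c k))
          (fun t => by rw [← ofReal_norm, hgnorm k t]), lintegral_const]
      rw [tsum_congr heq, ENNReal.tsum_mul_right,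
        ← ENNReal.ofReal_tsum_of_nonneg (fun k => (hcpos k).le) hcsum]
      exact ENNReal.mul_ne_top ENNReal.ofReal_ne_top (measure_ne_top r univ)
    rw [← MeasureTheory.integral_tsum hmeas hlin]
    rw [integral_congr_ae (ae_of_all _ fun t => hg_pt t)]
    exact integral_ofReal
  -- summability facts
  have hsum_g_int : Summable (fun k : ℤ => ∫ t, g k t ∂r) := by
    refine Summable.of_norm_bounded (g := fun k => c k * r.real univ)
      (hcsum.mul_right _) fun k => ?_
    have := norm_integral_le_of_norm_le_const (μ := r) (C := c k)
      (f := g k) (ae_of_all _ fun t => le_of_eq (hgnorm k t))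
    simpa using this
  have hsum_s : ∀ s : Fin S, Summable (fun k : ℤ =>
      (w s : ℂ) * ((c k : ℂ) * Complex.exp (-(2 * π * Complex.I * (xs s) * k))
        * Complex.exp (2 * π * Complex.I * k * x))) := by
    intro s
    refine Summable.of_norm_bounded (g := fun k => |w s| * c k) ((hcsum.mul_left _)) fun k => ?_
    rw [norm_mul]
    have : ‖(c k : ℂ) * Complex.exp (-(2 * π * Complex.I * (xs s) * k))
        * Complex.exp (2 * π * Complex.I * k * x)‖ = c k := hgnorm k (xs s)
    rw [this, Complex.norm_real, Real.norm_eq_abs]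
  -- the full transform values
  set T : ℤ → ℂ := fun k => (c k : ℂ) * fh k * Complex.exp (2 * π * Complex.I * k * x) with hTdef
  have hT : ∀ k : ℤ, T k
      = (∑ s : Fin S, (w s : ℂ) * ((c k : ℂ) * Complex.exp (-(2 * π * Complex.I * (xs s) * k))
          * Complex.exp (2 * π * Complex.I * k * x)))
        + ∫ t, g k t ∂r := by
    intro k
    have hgr : ∫ t, g k t ∂r = (c k : ℂ) * (∫ t, Complex.exp (-(2 * π * Complex.I * t * k)) ∂r)
        * Complex.exp (2 * π * Complex.I * k * x) := by
      rw [hgdef]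
      simp only
      rw [show (fun t : ℝ => (c k : ℂ) * Complex.exp (-(2 * π * Complex.I * t * k))
          * Complex.exp (2 * π * Complex.I * k * x))
        = fun t : ℝ => ((c k : ℂ) * Complex.exp (2 * π * Complex.I * k * x))
          * Complex.exp (-(2 * π * Complex.I * t * k)) from funext fun t => by ring]
      rw [integral_const_mul]
      ring
    rw [hTdef]
    simp only
    rw [hfh_eq k, hgr, mul_add, add_mul, Finset.mul_sum, Finset.sum_mul]
    congr 1
    exact Finset.sum_congr rfl fun s _ => by ring
  have hsum_sum : Summable (fun k : ℤ => ∑ s : Fin S,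
      (w s : ℂ) * ((c k : ℂ) * Complex.exp (-(2 * π * Complex.I * (xs s) * k))
        * Complex.exp (2 * π * Complex.I * k * x))) :=
    summable_sum fun s _ => hsum_s s
  have hsum_T : Summable T := (hsum_sum.add hsum_g_int).congr fun k => (hT k).symm
  -- value of the full sum
  have hFval : (∑' k : ℤ, T k)
      = (((∑ s : Fin S, w s * φp (x - xs s)) + ∫ t, φp (x - t) ∂r : ℝ) : ℂ) := by
    rw [tsum_congr hT, Summable.tsum_add hsum_sum hsum_g_int, Summable.tsum_finsetSum (fun s _ => hsum_s s), hr_int]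
    push_cast
    congr 1
    refine Finset.sum_congr rfl fun s _ => ?_
    rw [tsum_mul_left, hg_pt (xs s)]
  -- lower bound on the full sum
  have hρ : β * φp 0 ≤ (∑ s : Fin S, w s * φp (x - xs s)) + ∫ t, φp (x - t) ∂r := by
    have h1 : w s0 * φp (x - xs s0) ≤ ∑ s : Fin S, w s * φp (x - xs s) :=
      Finset.single_le_sum (f := fun s => w s * φp (x - xs s))
        (fun s _ => mul_nonneg (le_trans hβpos.le (hw s)) (hφnonneg _)) (Finset.mem_univ s0)
    have h2 : x - xs s0 = 0 := by rw [hxdef, sub_self]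
    have h3 : β * φp 0 ≤ w s0 * φp 0 :=
      mul_le_mul_of_nonneg_right (hw s0) hφ0pos.le
    have h4 : (0:ℝ) ≤ ∫ t, φp (x - t) ∂r := integral_nonneg fun t => hφnonneg _
    rw [h2] at h1
    linarith
  have habsF : β * φp 0 ≤ ‖∑' k : ℤ, T k‖ := by
    rw [hFval, Complex.norm_real, Real.norm_eq_abs]
    exact le_trans hρ (le_abs_self _)
  -- the truncated true sum
  set G : ℂ := ∑ k ∈ Finset.Icc (-(K:ℤ)) (K:ℤ), T k with hGdef
  -- tail bound
  have hTnorm : ∀ k : ℤ, ‖T k‖ ≤ c k := by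
    intro k
    rw [hTdef]
    simp only [norm_mul, Complex.norm_real, Real.norm_eq_abs,
      abs_of_nonneg (hcpos k).le]
    have h1 : ‖Complex.exp (2 * π * Complex.I * k * x)‖ = 1 := by
      rw [Complex.norm_exp]; simp [Complex.mul_re, Complex.mul_im]
    rw [h1, mul_one]
    calc c k * ‖fh k‖ ≤ c k * 1 :=
          mul_le_mul_of_nonneg_left (hfh1 k) (hcpos k).le
      _ = c k := mul_one _
  have htail : ‖(∑' k : ℤ, T k) - G‖ ≤ (β - ω) / 12 * φp 0 := by
    have hsplit := Summable.sum_add_tsum_compl (s := Finset.Icc (-(K:ℤ)) (K:ℤ)) hsum_T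
    have hdiff : (∑' k : ℤ, T k) - G
        = ∑' k : ((↑(Finset.Icc (-(K:ℤ)) (K:ℤ)) : Set ℤ)ᶜ : Set ℤ), T k := by
      rw [hGdef, eq_comm, eq_sub_iff_add_eq, add_comm]
      exact hsplit
    rw [hdiff]
    have hmem : ∀ k : ((↑(Finset.Icc (-(K:ℤ)) (K:ℤ)) : Set ℤ)ᶜ : Set ℤ),
        ((k:ℤ) < -(K:ℤ) ∨ (K:ℤ) < (k:ℤ)) := by
      intro k
      have := k.2
      simp only [mem_compl_iff, Finset.coe_Icc, mem_Icc, not_and_or, not_le] at this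
      omega
    have hb2 : (∑' k : ((↑(Finset.Icc (-(K:ℤ)) (K:ℤ)) : Set ℤ)ᶜ : Set ℤ), c (k:ℤ))
        ≤ ∑' m : ℤ, Real.exp (-π * σ ^ 2) * c m :=
      gauss_tail_le σ hσpos K hK c hcdef hcpos hcsum hKne
    have hb1 : ‖∑' k : ((↑(Finset.Icc (-(K:ℤ)) (K:ℤ)) : Set ℤ)ᶜ : Set ℤ), T k‖
        ≤ ∑' k : ((↑(Finset.Icc (-(K:ℤ)) (K:ℤ)) : Set ℤ)ᶜ : Set ℤ), c (k:ℤ) := by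
      refine le_trans (norm_tsum_le_tsum_norm ((hcsum.subtype _).of_nonneg_of_le
        (fun k => norm_nonneg _) (fun k => hTnorm _))) ?_
      exact Summable.tsum_le_tsum (fun k => hTnorm _)
        ((hcsum.subtype _).of_nonneg_of_le (fun k => norm_nonneg _) (fun k => hTnorm _))
        (hcsum.subtype _)
    rw [tsum_mul_left, hexp, ← hφ0] at hb2
    exact le_trans hb1 hb2
  -- error bound on the data sum
  set C : ℂ := ∑ k ∈ Finset.Icc (-(K:ℤ)) (K:ℤ),
      y k * (Real.exp (-π * ((k:ℝ) * σ / K) ^ 2) : ℂ)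
        * Complex.exp (2 * π * Complex.I * k * x) with hCdef
  have hCG : ‖C - G‖ ≤ ε * φp 0 := by
    rw [hCdef, hGdef, ← Finset.sum_sub_distrib]
    refine le_trans (norm_sum_le _ _) ?_
    have hterm : ∀ k ∈ Finset.Icc (-(K:ℤ)) (K:ℤ),
        ‖y k * (Real.exp (-π * ((k:ℝ) * σ / K) ^ 2) : ℂ)
          * Complex.exp (2 * π * Complex.I * k * x) - T k‖ ≤ ε * c k := by
      intro k hk
      have hdk : y k * (Real.exp (-π * ((k:ℝ) * σ / K) ^ 2) : ℂ)
          * Complex.exp (2 * π * Complex.I * k * x) - T k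
          = (y k - fh k) * ((c k : ℂ) * Complex.exp (2 * π * Complex.I * k * x)) := by
        rw [hTdef]; simp only; rw [hcdef]; simp only; ring
      rw [hdk, norm_mul, norm_mul]
      have h1 : ‖Complex.exp (2 * π * Complex.I * k * x)‖ = 1 := by
        rw [Complex.norm_exp]; simp [Complex.mul_re, Complex.mul_im]
      rw [h1, mul_one, Complex.norm_of_nonneg (hcpos k).le]
      have hyk : ‖y k - fh k‖ ≤ ε := by
        apply hy
        rw [Finset.mem_Icc] at hk
        rw [abs_le]
        omega
      exact mul_le_mul_of_nonneg_right hyk (hcpos k).le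
    refine le_trans (Finset.sum_le_sum hterm) ?_
    rw [← Finset.mul_sum]
    refine mul_le_mul_of_nonneg_left ?_ hε
    rw [hφ0]
    exact Summable.sum_le_tsum _ (fun k _ => (hcpos k).le) hcsum
  -- conclusion
  have htri : ‖∑' k : ℤ, T k‖
      ≤ ‖(∑' k : ℤ, T k) - G‖ + ‖C - G‖ + ‖C‖ := by
    have : (∑' k : ℤ, T k) = ((∑' k : ℤ, T k) - G) + -(C - G) + C := by ring
    calc ‖∑' k : ℤ, T k‖
        = ‖((∑' k : ℤ, T k) - G) + -(C - G) + C‖ := by rw [← this]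
      _ ≤ ‖((∑' k : ℤ, T k) - G) + -(C - G)‖ + ‖C‖ :=
          norm_add_le _ _
      _ ≤ (‖(∑' k : ℤ, T k) - G‖ + ‖-(C - G)‖) + ‖C‖ :=
          add_le_add (norm_add_le _ _) le_rfl
      _ = ‖(∑' k : ℤ, T k) - G‖ + ‖C - G‖ + ‖C‖ := by
          rw [norm_neg]
  have hClow : β * φp 0 - (β - ω) / 12 * φp 0 - ε * φp 0 ≤ ‖C‖ := by
    linarith [htri, habsF, htail, hCG]
  have hε' : ε * φp 0 ≤ (β - ω) / 3 * φp 0 := mul_le_mul_of_nonneg_right hε3 hφ0pos.le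
  have hcoef : ((6 * β + 5 * ω) / 11) * φp 0
      < β * φp 0 - (β - ω) / 12 * φp 0 - (β - ω) / 3 * φp 0 := by
    nlinarith [hφ0pos, mul_pos (sub_pos.mpr hβω) hφ0pos]
  linarith
end
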